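/- arXiv:1901.09574 — 4 statements merged into one kernel-verified Lean document; each statement's English description precedes it below -/
import Mathlib

section
/- Let J be an ideal of K{X;r} (resp. of K{X;r}°) and let G = (g_1,…,g_s) be a Gröbner basis of J. Then G generates J as an ideal of K{X;r} (resp. of K{X;r}°). -/
open MvPowerSeries

noncomputable section

/-- A normalized discrete valuation on a field `K`, complete with respect to
the associated distance. -/
structure IsCDVField {K : Type*} [Field K] (val : K → WithTop ℤ) : Prop where
  eq_top_iff : ∀ x : K, val x = ⊤ ↔ x = 0
  map_one : val 1 = 0
  map_mul : ∀ x y : K, val (x * y) = val x + val y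
  min_le_val_add : ∀ x y : K, min (val x) (val y) ≤ val (x + y)
  surjective : ∀ m : ℤ, ∃ x : K, val x = (m : WithTop ℤ)
  complete : ∀ u : ℕ → K,
      (∀ M : ℤ, ∃ N : ℕ, ∀ p, N ≤ p → ∀ q, N ≤ q → (M : WithTop ℤ) ≤ val (u p - u q)) →
      ∃ l : K, ∀ M : ℤ, ∃ N : ℕ, ∀ p, N ≤ p → (M : WithTop ℤ) ≤ val (u p - l)

/-- A monomial order: a well-order compatible with addition. -/
structure IsMonomialOrder {M : Type*} [AddCommMonoid M] (mo : M → M → Prop) : Prop where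
  refl : ∀ i, mo i i
  trans : ∀ i j k, mo i j → mo j k → mo i k
  antisymm : ∀ i j, mo i j → mo j i → i = j
  total : ∀ i j, mo i j ∨ mo j i
  add_right : ∀ i j k, mo i j → mo (i + k) (j + k)
  wf : WellFounded fun i j => mo i j ∧ i ≠ j

variable {K : Type*} [Field K] {n : ℕ}

/-- The valuation of `K`, with values in `WithTop ℚ`. -/
def valQ (val : K → WithTop ℤ) (a : K) : WithTop ℚ :=
  WithTop.map (fun m : ℤ => (m : ℚ)) (val a)

/-- The dot product `r·i`. -/
def wt (r : Fin n → ℚ) (i : Fin n →₀ ℕ) : ℚ :=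
  ∑ j, r j * (i j : ℚ)

/-- `val_r` of the term `a·X^i`, namely `val a - r·i`. -/
def tval (val : K → WithTop ℤ) (r : Fin n → ℚ) (a : K) (i : Fin n →₀ ℕ) : WithTop ℚ :=
  valQ val a + ((-wt r i : ℚ) : WithTop ℚ)

/-- `val_r` of the coefficient term of `f` at exponent `i`. -/
def cval (val : K → WithTop ℤ) (r : Fin n → ℚ) (f : MvPowerSeries (Fin n) K)
    (i : Fin n →₀ ℕ) : WithTop ℚ :=
  tval val r (MvPowerSeries.coeff i f) i

/-- Membership in the Tate algebra `K{X; r}`: the coefficient valuations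
`val(a_i) - r·i` tend to `+∞`, i.e. for each `C` only finitely many of them are `< C`. -/
def IsTate (val : K → WithTop ℤ) (r : Fin n → ℚ) (f : MvPowerSeries (Fin n) K) : Prop :=
  ∀ C : ℚ, {i : Fin n →₀ ℕ | cval val r f i < (C : WithTop ℚ)}.Finite

/-- The Tate algebra `K{X; r}`, as a subset of the ring of power series. -/
def TateSet (val : K → WithTop ℤ) (r : Fin n → ℚ) : Set (MvPowerSeries (Fin n) K) :=
  {f | IsTate val r f}

/-- The integral Tate algebra `K{X; r}°` (Tate series of nonnegative Gauss valuation). -/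
def TateIntSet (val : K → WithTop ℤ) (r : Fin n → ℚ) : Set (MvPowerSeries (Fin n) K) :=
  {f | IsTate val r f ∧ ∀ i, (0 : WithTop ℚ) ≤ cval val r f i}

/-- The Gauss valuation of `f` equals `v`. -/
def GaussValEq (val : K → WithTop ℤ) (r : Fin n → ℚ) (f : MvPowerSeries (Fin n) K)
    (v : ℚ) : Prop :=
  (∀ i, (v : WithTop ℚ) ≤ cval val r f i) ∧ ∃ i, cval val r f i = (v : WithTop ℚ)

/-- `J` is an ideal of the subring `A` of the power series ring. -/
structure IsIdealOf (A J : Set (MvPowerSeries (Fin n) K)) : Prop where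
  subset : J ⊆ A
  zero_mem : (0 : MvPowerSeries (Fin n) K) ∈ J
  add_mem : ∀ f ∈ J, ∀ g ∈ J, f + g ∈ J
  neg_mem : ∀ f ∈ J, -f ∈ J
  smul_mem : ∀ a ∈ A, ∀ f ∈ J, a * f ∈ J

/-- `a·X^i < b·X^j` for the term order attached to `val`, `r` and the monomial order `mo`. -/
def TermLt (val : K → WithTop ℤ) (r : Fin n → ℚ) (mo : (Fin n →₀ ℕ) → (Fin n →₀ ℕ) → Prop)
    (a : K) (i : Fin n →₀ ℕ) (b : K) (j : Fin n →₀ ℕ) : Prop :=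
  tval val r b j < tval val r a i ∨ (tval val r a i = tval val r b j ∧ i ≠ j ∧ mo i j)

/-- `a·X^i ≤ b·X^j` for the term order. -/
def TermLe (val : K → WithTop ℤ) (r : Fin n → ℚ) (mo : (Fin n →₀ ℕ) → (Fin n →₀ ℕ) → Prop)
    (a : K) (i : Fin n →₀ ℕ) (b : K) (j : Fin n →₀ ℕ) : Prop :=
  tval val r b j < tval val r a i ∨ (tval val r a i = tval val r b j ∧ mo i j)

/-- `a·X^i` is the leading term of `f`. -/
def IsLeadingTerm (val : K → WithTop ℤ) (r : Fin n → ℚ)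
    (mo : (Fin n →₀ ℕ) → (Fin n →₀ ℕ) → Prop)
    (f : MvPowerSeries (Fin n) K) (a : K) (i : Fin n →₀ ℕ) : Prop :=
  MvPowerSeries.coeff i f = a ∧ a ≠ 0 ∧
    ∀ j, MvPowerSeries.coeff j f ≠ 0 → j ≠ i →
      TermLt val r mo (MvPowerSeries.coeff j f) j a i

/-- `a·X^i` divides `b·X^j` in the monoid of terms `T(r)`. -/
def TDiv (a : K) (i : Fin n →₀ ℕ) (b : K) (j : Fin n →₀ ℕ) : Prop :=
  a ≠ 0 ∧ b ≠ 0 ∧ ∃ k, j = i + k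

/-- `a·X^i` divides `b·X^j` in the monoid of integral terms `T°(r)`. -/
def TIntDiv (val : K → WithTop ℤ) (r : Fin n → ℚ) (a : K) (i : Fin n →₀ ℕ)
    (b : K) (j : Fin n →₀ ℕ) : Prop :=
  a ≠ 0 ∧ b ≠ 0 ∧ ∃ k, j = i + k ∧ (0 : WithTop ℚ) ≤ tval val r (b * a⁻¹) k

/-- `g` is a Gröbner basis of `J`, as an ideal of `K{X;r}`. -/
def IsGB (val : K → WithTop ℤ) (r : Fin n → ℚ) (mo : (Fin n →₀ ℕ) → (Fin n →₀ ℕ) → Prop)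
    (J : Set (MvPowerSeries (Fin n) K)) {s : ℕ} (g : Fin s → MvPowerSeries (Fin n) K) : Prop :=
  (∀ k, g k ∈ J ∧ g k ≠ 0) ∧
    ∀ f ∈ J, ∀ a i, IsLeadingTerm val r mo f a i →
      ∃ k b j, IsLeadingTerm val r mo (g k) b j ∧ TDiv b j a i

/-- `g` is a Gröbner basis of `J`, as an ideal of `K{X;r}°`. -/
def IsGBInt (val : K → WithTop ℤ) (r : Fin n → ℚ) (mo : (Fin n →₀ ℕ) → (Fin n →₀ ℕ) → Prop)
    (J : Set (MvPowerSeries (Fin n) K)) {s : ℕ} (g : Fin s → MvPowerSeries (Fin n) K) : Prop :=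
  (∀ k, g k ∈ J ∧ g k ≠ 0) ∧
    ∀ f ∈ J, ∀ a i, IsLeadingTerm val r mo f a i →
      ∃ k b j, IsLeadingTerm val r mo (g k) b j ∧ TIntDiv val r b j a i

/-- The set `LT(J)` of leading terms of nonzero elements of `J`. -/
def LTSet (val : K → WithTop ℤ) (r : Fin n → ℚ) (mo : (Fin n →₀ ℕ) → (Fin n →₀ ℕ) → Prop)
    (J : Set (MvPowerSeries (Fin n) K)) : Set (K × (Fin n →₀ ℕ)) :=
  {t | ∃ f ∈ J, IsLeadingTerm val r mo f t.1 t.2}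

/-- Exponents of elements of `LT(J)`: the image of `LT(J)` modulo units of `K`. -/
def LTExpSet (val : K → WithTop ℤ) (r : Fin n → ℚ) (mo : (Fin n →₀ ℕ) → (Fin n →₀ ℕ) → Prop)
    (J : Set (MvPowerSeries (Fin n) K)) : Set (Fin n →₀ ℕ) :=
  {i | ∃ a, (a, i) ∈ LTSet val r mo J}

/-- The skeleton of `LT(J)` (modulo units of `K`): minimal elements for divisibility. -/
def SkelExp (val : K → WithTop ℤ) (r : Fin n → ℚ) (mo : (Fin n →₀ ℕ) → (Fin n →₀ ℕ) → Prop)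
    (J : Set (MvPowerSeries (Fin n) K)) : Set (Fin n →₀ ℕ) :=
  {i | i ∈ LTExpSet val r mo J ∧ ∀ j ∈ LTExpSet val r mo J, (∃ k, i = j + k) → j = i}

/-- The image of `LT(J)` modulo units of `K°`: pairs (exponent, valuation of the term). -/
def LTClassSet (val : K → WithTop ℤ) (r : Fin n → ℚ) (mo : (Fin n →₀ ℕ) → (Fin n →₀ ℕ) → Prop)
    (J : Set (MvPowerSeries (Fin n) K)) : Set ((Fin n →₀ ℕ) × ℚ) :=
  {c | ∃ a, (a, c.1) ∈ LTSet val r mo J ∧ tval val r a c.1 = (c.2 : WithTop ℚ)}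

/-- Divisibility of classes of integral terms modulo units of `K°`. -/
def ClassDiv {n : ℕ} (c d : (Fin n →₀ ℕ) × ℚ) : Prop :=
  (∃ k, d.1 = c.1 + k) ∧ c.2 ≤ d.2

/-- The skeleton of `LT(J)` modulo units of `K°`. -/
def SkelClass (val : K → WithTop ℤ) (r : Fin n → ℚ) (mo : (Fin n →₀ ℕ) → (Fin n →₀ ℕ) → Prop)
    (J : Set (MvPowerSeries (Fin n) K)) : Set ((Fin n →₀ ℕ) × ℚ) :=
  {c | c ∈ LTClassSet val r mo J ∧ ∀ d ∈ LTClassSet val r mo J, ClassDiv d c → d = c}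

/-- Minimal Gröbner basis of an ideal of `K{X;r}`: the classes of the leading terms
modulo units of `K` are pairwise distinct and are exactly the skeleton of `LT(J)`. -/
def IsMinGB (val : K → WithTop ℤ) (r : Fin n → ℚ) (mo : (Fin n →₀ ℕ) → (Fin n →₀ ℕ) → Prop)
    (J : Set (MvPowerSeries (Fin n) K)) {s : ℕ} (g : Fin s → MvPowerSeries (Fin n) K) : Prop :=
  IsGB val r mo J g ∧ ∃ e : Fin s → (Fin n →₀ ℕ),
    (∀ k, ∃ a, IsLeadingTerm val r mo (g k) a (e k)) ∧
    Function.Injective e ∧ Set.range e = SkelExp val r mo J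

/-- Minimal Gröbner basis of an ideal of `K{X;r}°`. -/
def IsMinGBInt (val : K → WithTop ℤ) (r : Fin n → ℚ) (mo : (Fin n →₀ ℕ) → (Fin n →₀ ℕ) → Prop)
    (J : Set (MvPowerSeries (Fin n) K)) {s : ℕ} (g : Fin s → MvPowerSeries (Fin n) K) : Prop :=
  IsGBInt val r mo J g ∧ ∃ e : Fin s → ((Fin n →₀ ℕ) × ℚ),
    (∀ k, ∃ a, IsLeadingTerm val r mo (g k) a (e k).1 ∧
      tval val r a (e k).1 = ((e k).2 : WithTop ℚ)) ∧
    Function.Injective e ∧ Set.range e = SkelClass val r mo J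

/-- The leading term of `f` (via choice). -/
def leadTerm (val : K → WithTop ℤ) (r : Fin n → ℚ) (mo : (Fin n →₀ ℕ) → (Fin n →₀ ℕ) → Prop)
    (f : MvPowerSeries (Fin n) K) : K × (Fin n →₀ ℕ) :=
  Classical.epsilon fun p => IsLeadingTerm val r mo f p.1 p.2

/-- Multiplication of a power series by the term `t`. -/
def termMul (t : K × (Fin n →₀ ℕ)) (f : MvPowerSeries (Fin n) K) : MvPowerSeries (Fin n) K :=
  (MvPowerSeries.monomial t.2 t.1) * f

/-- The S-polynomial `S(f, g) = (LT(g)/gcd(LT f, LT g))·f - (LT(f)/gcd(LT f, LT g))·g`. -/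
def Spoly (val : K → WithTop ℤ) (π : K) (r : Fin n → ℚ)
    (mo : (Fin n →₀ ℕ) → (Fin n →₀ ℕ) → Prop)
    (f g : MvPowerSeries (Fin n) K) : MvPowerSeries (Fin n) K :=
  let a := (leadTerm val r mo f).1
  let i := (leadTerm val r mo f).2
  let b := (leadTerm val r mo g).1
  let j := (leadTerm val r mo g).2
  let m : ℤ := min (WithTop.untopD 0 (val a)) (WithTop.untopD 0 (val b))
  termMul (b * π ^ (-m), j - i) f - termMul (a * π ^ (-m), i - j) g

/-- `f` reduces to zero modulo the family `g` with quotients in `A`. -/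
def ReducesToZero (val : K → WithTop ℤ) (r : Fin n → ℚ)
    (mo : (Fin n →₀ ℕ) → (Fin n →₀ ℕ) → Prop) (A : Set (MvPowerSeries (Fin n) K))
    {s : ℕ} (g : Fin s → MvPowerSeries (Fin n) K) (f : MvPowerSeries (Fin n) K) : Prop :=
  f = 0 ∨ ∃ q : Fin s → MvPowerSeries (Fin n) K, (∀ k, q k ∈ A) ∧ f = ∑ k, q k * g k ∧
    ∀ k i, MvPowerSeries.coeff i (q k) ≠ 0 →
      ∀ b j, IsLeadingTerm val r mo (g k) b j →
      ∀ a₀ i₀, IsLeadingTerm val r mo f a₀ i₀ →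
        TermLe val r mo (MvPowerSeries.coeff i (q k) * b) (i + j) a₀ i₀

set_option linter.unusedSectionVars false
namespace S7

variable {K : Type*} [Field K] {n : ℕ}

section Val
variable {val : K → WithTop ℤ} (hv : IsCDVField val)
include hv

lemma val_zero : val 0 = ⊤ := (hv.eq_top_iff 0).2 rfl

lemma val_ne_top {x : K} (hx : x ≠ 0) : val x ≠ ⊤ := fun h => hx ((hv.eq_top_iff x).1 h)

lemma val_neg_one : val (-1 : K) = 0 := by
  have h := hv.map_mul (-1) (-1)
  rw [neg_mul_neg, one_mul, hv.map_one] at h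
  obtain ⟨m, hm⟩ := WithTop.ne_top_iff_exists.1 (val_ne_top hv (by norm_num : (-1:K) ≠ 0))
  rw [← hm, ← WithTop.coe_add] at h
  have h2 : (0 : ℤ) = m + m := by exact_mod_cast h
  have hm0 : m = 0 := by omega
  rw [← hm, hm0, WithTop.coe_zero]

lemma val_neg (x : K) : val (-x) = val x := by
  rw [← neg_one_mul, hv.map_mul, val_neg_one hv, zero_add]

lemma val_min_le_sub (x y : K) : min (val x) (val y) ≤ val (x - y) := by
  rw [sub_eq_add_neg]
  calc min (val x) (val y) = min (val x) (val (-y)) := by rw [val_neg hv]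
  _ ≤ val (x + -y) := hv.min_le_val_add x (-y)

/-! valQ lemmas -/

lemma valQ_eq_top_iff (x : K) : valQ val x = ⊤ ↔ x = 0 := by
  rw [valQ, WithTop.map_eq_top_iff, hv.eq_top_iff]

lemma valQ_zero : valQ val (0 : K) = ⊤ := (valQ_eq_top_iff hv 0).2 rfl

lemma valQ_ne_top {x : K} (hx : x ≠ 0) : valQ val x ≠ ⊤ :=
  fun h => hx ((valQ_eq_top_iff hv x).1 h)

lemma valQ_one : valQ val (1 : K) = 0 := by
  rw [valQ, hv.map_one]; rfl

omit hv in
lemma valQ_mono' {x y : WithTop ℤ} (h : x ≤ y) :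
    WithTop.map (fun m : ℤ => (m : ℚ)) x ≤ WithTop.map (fun m : ℤ => (m : ℚ)) y :=
  (WithTop.map_le_iff _ (fun {a b} => Int.cast_le)).2 h

lemma valQ_mono {x y : K} (h : val x ≤ val y) : valQ val x ≤ valQ val y := valQ_mono' h

lemma valQ_mul (x y : K) : valQ val (x * y) = valQ val x + valQ val y := by
  unfold valQ
  rw [hv.map_mul]
  have : (fun m : ℤ => (m : ℚ)) = ⇑(Int.castAddHom ℚ) := rfl
  rw [this, WithTop.map_add]

lemma valQ_neg (x : K) : valQ val (-x) = valQ val x := by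
  rw [valQ, valQ, val_neg hv]

omit hv in
lemma le_valQ_iff {M : ℤ} {x : K} :
    ((M : ℚ) : WithTop ℚ) ≤ valQ val x ↔ (M : WithTop ℤ) ≤ val x := by
  have : ((M : ℚ) : WithTop ℚ) = WithTop.map (fun m : ℤ => (m : ℚ)) (M : WithTop ℤ) := rfl
  rw [this, valQ, WithTop.map_le_iff _ (fun {a b} => Int.cast_le)]

omit hv in
lemma map_min' (x y : WithTop ℤ) :
    WithTop.map (fun m : ℤ => (m : ℚ)) (min x y)
      = min (WithTop.map (fun m : ℤ => (m : ℚ)) x) (WithTop.map (fun m : ℤ => (m : ℚ)) y) := by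
  have hmono : Monotone (WithTop.map (fun m : ℤ => (m : ℚ))) :=
    Monotone.withTop_map (fun a b hab => by exact_mod_cast hab)
  exact hmono.map_min

lemma valQ_min_le_add (x y : K) : min (valQ val x) (valQ val y) ≤ valQ val (x + y) := by
  rw [valQ, valQ, valQ, ← map_min']
  exact valQ_mono' (hv.min_le_val_add x y)

lemma valQ_min_le_sub (x y : K) : min (valQ val x) (valQ val y) ≤ valQ val (x - y) := by
  rw [sub_eq_add_neg]
  calc min (valQ val x) (valQ val y) = min (valQ val x) (valQ val (-y)) := by rw [valQ_neg hv]
  _ ≤ valQ val (x + -y) := valQ_min_le_add hv x (-y)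

lemma valQ_sum {ι : Type*} (s : Finset ι) (f : ι → K) (c : WithTop ℚ)
    (h : ∀ i ∈ s, c ≤ valQ val (f i)) : c ≤ valQ val (∑ i ∈ s, f i) := by
  classical
  induction s using Finset.cons_induction with
  | empty => rw [Finset.sum_empty, valQ_zero hv]; exact le_top
  | cons a s ha ih =>
    rw [Finset.sum_cons]
    refine le_trans (le_min (h a (Finset.mem_cons_self a s))
      (ih fun i hi => h i (Finset.mem_cons_of_mem hi))) ?_
    exact valQ_min_le_add hv _ _

end Val
end S7
namespace S7
section Tval
variable {K : Type*} [Field K] {n : ℕ}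
variable {val : K → WithTop ℤ} (hv : IsCDVField val) {r : Fin n → ℚ}
  {mo : (Fin n →₀ ℕ) → (Fin n →₀ ℕ) → Prop} (hmo : IsMonomialOrder mo)

lemma wt_add (i j : Fin n →₀ ℕ) : wt r (i + j) = wt r i + wt r j := by
  unfold wt
  rw [← Finset.sum_add_distrib]
  refine Finset.sum_congr rfl fun x _ => ?_
  rw [Finsupp.add_apply]
  push_cast
  ring

include hv

lemma tval_eq_top_iff {a : K} {i : Fin n →₀ ℕ} : tval val r a i = ⊤ ↔ a = 0 := by
  rw [tval, WithTop.add_eq_top]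
  simp [valQ_eq_top_iff hv]

lemma tval_zero (i : Fin n →₀ ℕ) : tval val r (0 : K) i = ⊤ := (tval_eq_top_iff hv).2 rfl

lemma tval_ne_top {a : K} (ha : a ≠ 0) (i : Fin n →₀ ℕ) : tval val r a i ≠ ⊤ :=
  fun h => ha ((tval_eq_top_iff hv).1 h)

lemma tval_mul (a b : K) (i j : Fin n →₀ ℕ) :
    tval val r (a * b) (i + j) = tval val r a i + tval val r b j := by
  rw [tval, tval, tval, valQ_mul hv, wt_add]
  have : ((-(wt r i + wt r j) : ℚ) : WithTop ℚ)
      = ((-wt r i : ℚ) : WithTop ℚ) + ((-wt r j : ℚ) : WithTop ℚ) := by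
    rw [neg_add, WithTop.coe_add]
  rw [this, add_add_add_comm]

lemma tval_min_le_sub (x y : K) (e : Fin n →₀ ℕ) :
    min (tval val r x e) (tval val r y e) ≤ tval val r (x - y) e := by
  unfold tval
  rw [min_add_add_right]
  exact add_le_add_left (valQ_min_le_sub hv x y) _

omit hv in
lemma cval_sub (f g : MvPowerSeries (Fin n) K) (e : Fin n →₀ ℕ) :
    cval val r (f - g) e = tval val r (MvPowerSeries.coeff e f - MvPowerSeries.coeff e g) e := by
  rw [cval, map_sub]

lemma cval_zero (e : Fin n →₀ ℕ) : cval val r (0 : MvPowerSeries (Fin n) K) e = ⊤ := by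
  rw [cval, map_zero]; exact tval_zero hv e

lemma cval_eq_top_iff {f : MvPowerSeries (Fin n) K} {e : Fin n →₀ ℕ} :
    cval val r f e = ⊤ ↔ MvPowerSeries.coeff e f = 0 := tval_eq_top_iff hv

/-- Multiplying a strict term inequality by a nonzero term. -/
lemma termLt_mul (hmo : IsMonomialOrder mo) {x b : K} {e j : Fin n →₀ ℕ}
    (h : TermLt val r mo x e b j) (c : K) (hc : c ≠ 0) (l : Fin n →₀ ℕ) :
    TermLt val r mo (c * x) (l + e) (c * b) (l + j) := by
  rcases h with h | ⟨h1, h2, h3⟩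
  · left
    rw [tval_mul hv, tval_mul hv]
    exact WithTop.add_lt_add_left (tval_ne_top hv hc l) h
  · right
    refine ⟨by rw [tval_mul hv, tval_mul hv, h1], fun hh => h2 (add_left_cancel hh), ?_⟩
    have := hmo.add_right e j l h3
    rwa [add_comm e l, add_comm j l] at this

/-- The leading term has minimal `val_r` among all terms. -/
lemma ilt_le {f : MvPowerSeries (Fin n) K} {a : K} {i : Fin n →₀ ℕ}
    (h : IsLeadingTerm val r mo f a i) (e : Fin n →₀ ℕ) :
    tval val r a i ≤ cval val r f e := by
  rcases eq_or_ne e i with rfl | hei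
  · rw [cval, h.1]
  rcases eq_or_ne (MvPowerSeries.coeff e f) 0 with hc | hc
  · rw [cval, hc, tval_zero hv]
    exact le_top
  rcases h.2.2 e hc hei with hlt | ⟨heq, _⟩
  · exact le_of_lt hlt
  · exact le_of_eq heq.symm

omit hv in
/-- Existence of a maximum of a finite set for a monomial order. -/
lemma exists_mo_max (hmo : IsMonomialOrder mo) (s : Finset (Fin n →₀ ℕ)) (hs : s.Nonempty) :
    ∃ i ∈ s, ∀ j ∈ s, mo j i := by
  classical
  induction s using Finset.cons_induction with
  | empty => exact absurd hs (by simp)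
  | cons a s ha ih =>
    rcases s.eq_empty_or_nonempty with rfl | hs'
    · exact ⟨a, Finset.mem_cons_self a _, by simpa using hmo.refl a⟩
    · obtain ⟨i, hi, hmax⟩ := ih hs'
      rcases hmo.total a i with h | h
      · exact ⟨i, Finset.mem_cons_of_mem hi, fun j hj => by
          rcases Finset.mem_cons.1 hj with rfl | hj
          · exact h
          · exact hmax j hj⟩
      · exact ⟨a, Finset.mem_cons_self a _, fun j hj => by
          rcases Finset.mem_cons.1 hj with rfl | hj
          · exact hmo.refl j
          · exact hmo.trans _ _ _ (hmax j hj) h⟩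

/-- A nonzero Tate series has a leading term. -/
lemma exists_ilt (hmo : IsMonomialOrder mo) {f : MvPowerSeries (Fin n) K}
    (hf : IsTate val r f) (h0 : f ≠ 0) : ∃ a i, IsLeadingTerm val r mo f a i := by
  classical
  have : ∃ i₀, MvPowerSeries.coeff i₀ f ≠ 0 := by
    by_contra h
    push_neg at h
    exact h0 (MvPowerSeries.ext fun i => by rw [h i, map_zero])
  obtain ⟨i₀, hi₀⟩ := this
  have hct : cval val r f i₀ ≠ ⊤ := fun h => hi₀ ((cval_eq_top_iff hv).1 h)
  obtain ⟨q₀, hq₀⟩ := WithTop.ne_top_iff_exists.1 hct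
  set C : ℚ := q₀ + 1 with hC
  have hfin := hf C
  set T : Finset (Fin n →₀ ℕ) := hfin.toFinset with hT
  have hi₀T : i₀ ∈ T := by
    rw [hT, Set.Finite.mem_toFinset]
    show cval val r f i₀ < (C : WithTop ℚ)
    rw [← hq₀]
    exact_mod_cast by linarith [le_refl q₀]
  obtain ⟨iv, hivT, hiv⟩ := Finset.exists_min_image T (cval val r f) ⟨i₀, hi₀T⟩
  set v := cval val r f iv with hvdef
  have hvlt : v < (C : WithTop ℚ) := by
    rw [hT, Set.Finite.mem_toFinset] at hivT; exact hivT
  have hvmin : ∀ e, v ≤ cval val r f e := by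
    intro e
    by_cases he : e ∈ T
    · exact hiv e he
    · rw [hT, Set.Finite.mem_toFinset] at he
      simp only [Set.mem_setOf_eq, not_lt] at he
      exact le_trans (le_of_lt hvlt) he
  set Tmin : Finset (Fin n →₀ ℕ) := T.filter (fun i => cval val r f i = v) with hTmin
  have hTmne : Tmin.Nonempty := ⟨iv, by rw [hTmin, Finset.mem_filter]; exact ⟨hivT, rfl⟩⟩
  obtain ⟨istar, histar, hmax⟩ := exists_mo_max hmo Tmin hTmne
  rw [hTmin, Finset.mem_filter] at histar
  have hcvstar : cval val r f istar = v := histar.2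
  have hvne : v ≠ ⊤ := fun h => absurd (h ▸ hvlt) (by simp)
  have hastar : MvPowerSeries.coeff istar f ≠ 0 := by
    intro h
    exact hvne (by rw [← hcvstar, (cval_eq_top_iff hv)]; exact h)
  refine ⟨MvPowerSeries.coeff istar f, istar, rfl, hastar, ?_⟩
  intro j hj hji
  have htvstar : tval val r (MvPowerSeries.coeff istar f) istar = v := hcvstar
  rcases lt_or_eq_of_le (hvmin j) with hlt | heq
  · left; rw [htvstar]; exact hlt
  · right
    refine ⟨heq.symm.trans htvstar.symm, hji, ?_⟩
    have hjT : j ∈ Tmin := by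
      rw [hTmin, Finset.mem_filter, hT, Set.Finite.mem_toFinset]
      exact ⟨lt_of_le_of_lt (le_of_eq heq.symm) hvlt, heq.symm⟩
    exact hmax j hjT

end Tval
end S7
namespace S7
section Core
variable {K : Type*} [Field K] {n : ℕ}
variable {val : K → WithTop ℤ} (hv : IsCDVField val) {r : Fin n → ℚ}
  {mo : (Fin n →₀ ℕ) → (Fin n →₀ ℕ) → Prop} (hmo : IsMonomialOrder mo)

omit hv in
lemma ilt_ne_zero {f : MvPowerSeries (Fin n) K} {a : K} {i : Fin n →₀ ℕ}
    (h : IsLeadingTerm val r mo f a i) : f ≠ 0 := by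
  intro h0
  apply h.2.1
  rw [← h.1, h0, map_zero]

include hv in
lemma isTate_monomial (c : K) (l : Fin n →₀ ℕ) :
    IsTate val r ((MvPowerSeries.monomial l) c) := by
  classical
  intro C
  apply Set.Finite.subset (Set.finite_singleton l)
  intro e he
  have he' : cval val r ((MvPowerSeries.monomial l) c) e < (C : WithTop ℚ) := he
  by_contra hel
  rw [Set.mem_singleton_iff] at hel
  rw [cval, MvPowerSeries.coeff_monomial, if_neg hel, tval_zero hv] at he'
  exact absurd he' not_top_lt

include hv hmo in
/-- The key step: subtracting the appropriate multiple of `gk` kills the leading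
term of `f` and leaves only strictly smaller terms. -/
lemma dom_step {f gk : MvPowerSeries (Fin n) K} {a b : K} {i j l : Fin n →₀ ℕ}
    (hf : IsLeadingTerm val r mo f a i) (hg : IsLeadingTerm val r mo gk b j)
    (hij : i = j + l) (e : Fin n →₀ ℕ) :
    tval val r a i < cval val r (f - (MvPowerSeries.monomial l) (a * b⁻¹) * gk) e ∨
      (tval val r a i = cval val r (f - (MvPowerSeries.monomial l) (a * b⁻¹) * gk) e
        ∧ e ≠ i ∧ mo e i) := by
  classical
  have ha : a ≠ 0 := hf.2.1
  have hb : b ≠ 0 := hg.2.1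
  set c : K := a * b⁻¹ with hcdef
  have hc : c ≠ 0 := mul_ne_zero ha (inv_ne_zero hb)
  have hcb : c * b = a := inv_mul_cancel_right₀ hb a
  have hanetop : tval val r a i ≠ ⊤ := tval_ne_top hv ha i
  rw [cval_sub, MvPowerSeries.coeff_monomial_mul]
  rcases eq_or_ne e i with rfl | hei
  · -- the leading terms cancel
    have hle : l ≤ e := hij ▸ le_add_self
    have helj : e - l = j := by rw [hij, add_tsub_cancel_right]
    rw [if_pos hle, helj, hg.1, hcb, hf.1, sub_self, tval_zero hv]
    exact Or.inl (lt_top_iff_ne_top.2 hanetop)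
  · -- away from the leading exponent, everything is strictly smaller
    have comb : ∀ x y : K,
        (tval val r a i < tval val r x e ∨ (tval val r x e = tval val r a i ∧ mo e i)) →
        (tval val r a i < tval val r y e ∨ (tval val r y e = tval val r a i ∧ mo e i)) →
        (tval val r a i < tval val r (x - y) e ∨
          (tval val r a i = tval val r (x - y) e ∧ e ≠ i ∧ mo e i)) := by
      intro x y hx hy
      have hx' : tval val r a i ≤ tval val r x e := by
        rcases hx with h | ⟨h, _⟩
        · exact le_of_lt h
        · exact le_of_eq h.symm
      have hy' : tval val r a i ≤ tval val r y e := by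
        rcases hy with h | ⟨h, _⟩
        · exact le_of_lt h
        · exact le_of_eq h.symm
      have hmin := tval_min_le_sub hv (r := r) x y e
      have hlb : tval val r a i ≤ tval val r (x - y) e :=
        le_trans (le_min hx' hy') hmin
      rcases lt_or_eq_of_le hlb with h | h
      · exact Or.inl h
      · refine Or.inr ⟨h, hei, ?_⟩
        have hminle : min (tval val r x e) (tval val r y e) ≤ tval val r a i := h ▸ hmin
        rcases min_choice (tval val r x e) (tval val r y e) with hm | hm
        · have : tval val r x e = tval val r a i :=
            le_antisymm (hm ▸ hminle) hx'
          rcases hx with hxl | ⟨_, hmo'⟩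
          · exact absurd (this ▸ hxl) (lt_irrefl _)
          · exact hmo'
        · have : tval val r y e = tval val r a i :=
            le_antisymm (hm ▸ hminle) hy'
          rcases hy with hyl | ⟨_, hmo'⟩
          · exact absurd (this ▸ hyl) (lt_irrefl _)
          · exact hmo'
    have hx : tval val r a i < tval val r (MvPowerSeries.coeff e f) e ∨
        (tval val r (MvPowerSeries.coeff e f) e = tval val r a i ∧ mo e i) := by
      rcases eq_or_ne (MvPowerSeries.coeff e f) 0 with h0 | h0
      · rw [h0, tval_zero hv]
        exact Or.inl (lt_top_iff_ne_top.2 hanetop)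
      · rcases hf.2.2 e h0 hei with h | ⟨h1, _, h3⟩
        · exact Or.inl h
        · exact Or.inr ⟨h1, h3⟩
    by_cases hle : l ≤ e
    · rw [if_pos hle]
      set d : Fin n →₀ ℕ := e - l with hddef
      have hd : l + d = e := add_tsub_cancel_of_le hle
      have hy : tval val r a i < tval val r (c * MvPowerSeries.coeff d gk) e ∨
          (tval val r (c * MvPowerSeries.coeff d gk) e = tval val r a i ∧ mo e i) := by
        rcases eq_or_ne (MvPowerSeries.coeff d gk) 0 with h0 | h0
        · rw [h0, mul_zero, tval_zero hv]
          exact Or.inl (lt_top_iff_ne_top.2 hanetop)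
        · have hdj : d ≠ j := by
            intro hdj
            apply hei
            rw [← hd, hdj, hij, add_comm]
          have hTL := termLt_mul hv hmo (hg.2.2 d h0 hdj) c hc l
          rw [hd, hcb] at hTL
          have hlj : l + j = i := by rw [hij, add_comm]
          rw [hlj] at hTL
          rcases hTL with h | ⟨h1, _, h3⟩
          · exact Or.inl h
          · exact Or.inr ⟨h1, h3⟩
      exact comb _ _ hx hy
    · rw [if_neg hle, sub_zero]
      rcases hx with h | ⟨h1, h3⟩
      · exact Or.inl h
      · exact Or.inr ⟨h1.symm, hei, h3⟩

end Core
end S7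
namespace S7
section Iter
variable {K : Type*} [Field K] {n : ℕ}

/-- No infinite descending sequences in a well-founded relation. -/
lemma no_descent {α : Type*} {rr : α → α → Prop} (h : WellFounded rr) (u : ℕ → α)
    (hu : ∀ m, rr (u (m + 1)) (u m)) : False := by
  have H : ∀ a, ∀ m, u m = a → False := by
    refine fun a => h.induction (C := fun a => ∀ m, u m = a → False) a ?_
    intro x ih m hm
    subst hm
    exact ih (u (m + 1)) (hu m) (m + 1) rfl
  exact H (u 0) 0 rfl

lemma exists_int_mul_of_den_dvd (q : ℚ) (d : ℤ) (h : (q.den : ℤ) ∣ d) :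
    ∃ z : ℤ, (z : ℚ) = q * d := by
  obtain ⟨c, hc⟩ := h
  refine ⟨q.num * c, ?_⟩
  have hden : ((q.den : ℚ)) ≠ 0 := by exact_mod_cast q.den_nz
  have hq : q * (q.den : ℚ) = (q.num : ℚ) := by
    nth_rewrite 1 [← Rat.num_div_den q]
    exact div_mul_cancel₀ _ hden
  rw [hc]
  push_cast
  rw [← mul_assoc, hq]

lemma exists_int_wt (r : Fin n → ℚ) (i : Fin n →₀ ℕ) :
    ∃ z : ℤ, (z : ℚ) = ((∏ j : Fin n, ((r j).den : ℤ) : ℤ) : ℚ) * wt r i := by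
  have h : ∀ j : Fin n, ∃ z : ℤ, (z : ℚ) = (r j) * (∏ j : Fin n, ((r j).den : ℤ) : ℤ) :=
    fun j => exists_int_mul_of_den_dvd _ _
      (Finset.dvd_prod_of_mem (fun j => ((r j).den : ℤ)) (Finset.mem_univ j))
  choose z hz using h
  refine ⟨∑ j, z j * (i j : ℤ), ?_⟩
  rw [wt, Finset.mul_sum]
  push_cast
  refine Finset.sum_congr rfl fun j _ => ?_
  rw [hz j]
  push_cast
  ring

variable (val : K → WithTop ℤ) (r : Fin n → ℚ)
  (mo : (Fin n →₀ ℕ) → (Fin n →₀ ℕ) → Prop)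
  (A J : Set (MvPowerSeries (Fin n) K)) {s : ℕ} (g : Fin s → MvPowerSeries (Fin n) K)

/-- Data `(k, c, l)` for one reduction step of `f`. -/
def Pred (f : MvPowerSeries (Fin n) K) (d : Fin s × K × (Fin n →₀ ℕ)) : Prop :=
  ∃ a i b j, IsLeadingTerm val r mo f a i ∧ IsLeadingTerm val r mo (g d.1) b j ∧
    i = j + d.2.2 ∧ d.2.1 = a * b⁻¹ ∧ (MvPowerSeries.monomial d.2.2) d.2.1 ∈ A

open Classical in
/-- One step of reduction. -/
noncomputable def step (f : MvPowerSeries (Fin n) K) :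
    MvPowerSeries (Fin n) K × Option (Fin s × K × (Fin n →₀ ℕ)) :=
  if h : ∃ d, Pred val r mo A g f d then
    (f - (MvPowerSeries.monomial h.choose.2.2) h.choose.2.1 * g h.choose.1, some h.choose)
  else (f, none)

/-- The sequence of partial remainders. -/
noncomputable def F (f0 : MvPowerSeries (Fin n) K) : ℕ → MvPowerSeries (Fin n) K
  | 0 => f0
  | m + 1 => (step val r mo A g (F f0 m)).1

variable {val r mo A J g}

lemma step_spec {f : MvPowerSeries (Fin n) K} (h : ∃ d, Pred val r mo A g f d) :
    ∃ d, (step val r mo A g f).2 = some d ∧ Pred val r mo A g f d ∧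
      (step val r mo A g f).1 = f - (MvPowerSeries.monomial d.2.2) d.2.1 * g d.1 := by
  rw [step, dif_pos h]
  exact ⟨h.choose, rfl, h.choose_spec, rfl⟩

lemma step_none {f : MvPowerSeries (Fin n) K} (h : ¬ ∃ d, Pred val r mo A g f d) :
    step val r mo A g f = (f, none) := by rw [step, dif_neg h]

lemma step_zero : step val r mo A g 0 = (0, none) :=
  step_none fun ⟨d, a, i, _, _, hilt, _⟩ => ilt_ne_zero hilt rfl

section WithHyp
variable (hJ : IsIdealOf A J)
  (HC : ∀ f ∈ J, f ≠ 0 → ∃ d, Pred val r mo A g f d)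
  (hgJ : ∀ k, g k ∈ J)
  {f0 : MvPowerSeries (Fin n) K} (hf0 : f0 ∈ J)
include hJ HC hgJ hf0

lemma F_mem : ∀ m, F val r mo A g f0 m ∈ J := by
  intro m
  induction m with
  | zero => exact hf0
  | succ m ih =>
    show (step val r mo A g (F val r mo A g f0 m)).1 ∈ J
    by_cases h : ∃ d, Pred val r mo A g (F val r mo A g f0 m) d
    · obtain ⟨d, _, hpred, h1⟩ := step_spec h
      rw [h1]
      obtain ⟨a, i, b, j, _, _, _, _, hmem⟩ := hpred
      rw [sub_eq_add_neg]
      exact hJ.add_mem _ ih _ (hJ.neg_mem _ (hJ.smul_mem _ hmem _ (hgJ d.1)))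
    · rw [step_none h]
      exact ih

lemma F_step {m : ℕ} (hne : F val r mo A g f0 m ≠ 0) :
    ∃ d, (step val r mo A g (F val r mo A g f0 m)).2 = some d ∧
      Pred val r mo A g (F val r mo A g f0 m) d ∧
      F val r mo A g f0 (m + 1)
        = F val r mo A g f0 m - (MvPowerSeries.monomial d.2.2) d.2.1 * g d.1 :=
  step_spec (HC _ (F_mem hJ HC hgJ hf0 m) hne)

omit hJ HC hgJ hf0 in
lemma F_zero_succ {m : ℕ} (h0 : F val r mo A g f0 m = 0) :
    F val r mo A g f0 (m + 1) = 0 := by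
  show (step val r mo A g (F val r mo A g f0 m)).1 = 0
  rw [h0, step_zero]

omit hJ HC hgJ hf0 in
lemma F_stab {m m' : ℕ} (h0 : F val r mo A g f0 m = 0) (hmm : m ≤ m') :
    F val r mo A g f0 m' = 0 := by
  induction m', hmm using Nat.le_induction with
  | base => exact h0
  | succ p hp ih => exact F_zero_succ ih

/-- Convergence of the remainders: the Gauss valuations tend to `+∞`. -/
lemma conv1 (hv : IsCDVField val) (hmo : IsMonomialOrder mo) :
    ∀ C : ℚ, ∃ N : ℕ, ∀ m, N ≤ m → ∀ e,
      (C : WithTop ℚ) ≤ cval val r (F val r mo A g f0 m) e := by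
  by_contra hcon
  push_neg at hcon
  obtain ⟨C, hC⟩ := hcon
  -- all remainders are nonzero
  have hFne : ∀ m, F val r mo A g f0 m ≠ 0 := by
    intro m hm
    obtain ⟨m', hm', e, he⟩ := hC m
    have hall : F val r mo A g f0 m' = 0 := F_stab hm hm'
    rw [hall, cval_zero hv] at he
    exact absurd he not_top_lt
  -- extract leading terms and the domination property
  have hstep : ∀ m, ∃ a i, IsLeadingTerm val r mo (F val r mo A g f0 m) a i ∧
      ∀ e, tval val r a i < cval val r (F val r mo A g f0 (m+1)) e ∨
        (tval val r a i = cval val r (F val r mo A g f0 (m+1)) e ∧ e ≠ i ∧ mo e i) := by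
    intro m
    obtain ⟨d, _, hpred, hsucc⟩ := F_step hJ HC hgJ hf0 (hFne m)
    obtain ⟨a, i, b, j, hfa, hgb, hij, hc, _⟩ := hpred
    refine ⟨a, i, hfa, ?_⟩
    rw [hsucc, hc]
    exact dom_step hv hmo hfa hgb hij
  choose a i hilt hdom using hstep
  set v : ℕ → WithTop ℚ := fun m => tval val r (a m) (i m) with hvdef
  have hvmin : ∀ m e, v m ≤ cval val r (F val r mo A g f0 m) e := fun m => ilt_le hv (hilt m)
  have hvstep : ∀ m, v m < v (m+1) ∨ (v m = v (m+1) ∧ i (m+1) ≠ i m ∧ mo (i (m+1)) (i m)) := by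
    intro m
    have h := hdom m (i (m+1))
    have hcv : cval val r (F val r mo A g f0 (m+1)) (i (m+1)) = v (m+1) := by
      rw [cval, (hilt (m+1)).1]
    rw [hcv] at h
    exact h
  have hvmono : ∀ m m', m ≤ m' → v m ≤ v m' := by
    intro m m' hmm
    induction m', hmm using Nat.le_induction with
    | base => exact le_refl _
    | succ p hp ih =>
      refine le_trans ih ?_
      rcases hvstep p with h' | ⟨h', _⟩
      · exact le_of_lt h'
      · exact le_of_eq h'
  have hvlt : ∀ m, v m < (C : WithTop ℚ) := by
    intro m
    obtain ⟨m', hm', e, he⟩ := hC m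
    exact lt_of_le_of_lt (le_trans (hvmono m m' hm') (hvmin m' e)) he
  -- extract rational values
  have hvq : ∀ m, ∃ q : ℚ, (q : WithTop ℚ) = v m :=
    fun m => WithTop.ne_top_iff_exists.1 (ne_top_of_lt (hvlt m))
  choose vq hvq using hvq
  have hva : ∀ m, ∃ z : ℤ, (z : WithTop ℤ) = val (a m) :=
    fun m => WithTop.ne_top_iff_exists.1 (val_ne_top hv (hilt m).2.1)
  choose va hva using hva
  have hvqva : ∀ m, vq m = (va m : ℚ) - wt r (i m) := by
    intro m
    have h : ((vq m : ℚ) : WithTop ℚ) = (((va m : ℚ) - wt r (i m) : ℚ) : WithTop ℚ) := by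
      rw [hvq, hvdef]
      show tval val r (a m) (i m) = _
      rw [tval, valQ, ← hva m, WithTop.map_coe, ← WithTop.coe_add]
      rw [WithTop.coe_inj]
      ring
    exact_mod_cast h
  set D : ℤ := ∏ j : Fin n, ((r j).den : ℤ) with hDdef
  have hDpos : 0 < D := Finset.prod_pos fun j _ => by exact_mod_cast (r j).pos
  have hz : ∀ m, ∃ z : ℤ, (z : ℚ) = (D : ℚ) * wt r (i m) := fun m => exists_int_wt r (i m)
  choose z hz using hz
  set w : ℕ → ℤ := fun m => D * va m - z m with hwdef
  have hw : ∀ m, (w m : ℚ) = (D : ℚ) * vq m := by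
    intro m
    rw [hwdef]
    push_cast
    rw [hz m, hvqva m]
    ring
  set B : ℤ := ⌈(D : ℚ) * C⌉ with hBdef
  have hwB : ∀ m, w m < B ∨ w m ≤ B := by
    intro m
    right
    have h1 : (w m : ℚ) < (D : ℚ) * C := by
      rw [hw m]
      apply mul_lt_mul_of_pos_left _ (by exact_mod_cast hDpos)
      have := hvlt m
      rw [← hvq m] at this
      exact_mod_cast this
    have h2 : (w m : ℚ) < (B : ℚ) := lt_of_lt_of_le h1 (Int.le_ceil _)
    exact le_of_lt (by exact_mod_cast h2)
  have hwB' : ∀ m, w m ≤ B := fun m => (hwB m).elim le_of_lt id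
  -- the measure
  set μ : ℕ → ℕ × (Fin n →₀ ℕ) := fun m => ((B - w m).toNat, i m) with hμdef
  have hwf : WellFounded (Prod.Lex (· < · : ℕ → ℕ → Prop)
      (fun x y => mo x y ∧ x ≠ y)) :=
    WellFounded.prod_lex (Nat.lt_wfRel.wf) hmo.wf
  refine no_descent hwf μ ?_
  intro m
  rcases hvstep m with h | ⟨h, hne, hmo'⟩
  · -- the integer part strictly increases
    have hww : w m < w (m+1) := by
      have h1 : (w m : ℚ) < (w (m+1) : ℚ) := by
        rw [hw, hw]
        apply mul_lt_mul_of_pos_left _ (by exact_mod_cast hDpos)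
        have := h
        rw [← hvq m, ← hvq (m+1)] at this
        exact_mod_cast this
      exact_mod_cast h1
    have : (B - w (m+1)).toNat < (B - w m).toNat := by
      have h1 := hwB' (m+1)
      omega
    exact Prod.Lex.left _ _ this
  · have hww : w (m+1) = w m := by
      have h1 : (w (m+1) : ℚ) = (w m : ℚ) := by
        rw [hw, hw]
        congr 1
        have := h
        rw [← hvq m, ← hvq (m+1)] at this
        exact_mod_cast this.symm
      exact_mod_cast h1
    have : μ (m+1) = ((B - w m).toNat, i (m+1)) := by rw [hμdef]; simp [hww]
    rw [this]
    exact Prod.Lex.right _ ⟨hmo', hne⟩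

end WithHyp
end Iter
end S7
namespace S7
section Quot
variable {K : Type*} [Field K] {n : ℕ}
variable {val : K → WithTop ℤ} {r : Fin n → ℚ}
  {mo : (Fin n →₀ ℕ) → (Fin n →₀ ℕ) → Prop}
  {A J : Set (MvPowerSeries (Fin n) K)} {s : ℕ} {g : Fin s → MvPowerSeries (Fin n) K}

/-- `x < c` and `y ≤ w` give `x + y < c + w` in `WithTop ℚ`. -/
lemma wtop_add_lt {x y : WithTop ℚ} {c w : ℚ} (hx : x < (c : WithTop ℚ))
    (hy : y ≤ (w : WithTop ℚ)) : x + y < ((c + w : ℚ) : WithTop ℚ) := by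
  obtain ⟨xq, hxq⟩ := WithTop.ne_top_iff_exists.1 (ne_top_of_lt hx)
  obtain ⟨yq, hyq⟩ := WithTop.ne_top_iff_exists.1 (ne_top_of_le_ne_top WithTop.coe_ne_top hy)
  rw [← hxq, ← hyq, ← WithTop.coe_add, WithTop.coe_lt_coe]
  rw [← hxq, WithTop.coe_lt_coe] at hx
  rw [← hyq, WithTop.coe_le_coe] at hy
  linarith

lemma valQ_eq_tval_add (a : K) (e : Fin n →₀ ℕ) :
    valQ val a = tval val r a e + ((wt r e : ℚ) : WithTop ℚ) := by
  rw [tval, add_assoc, ← WithTop.coe_add, neg_add_cancel, WithTop.coe_zero, add_zero]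

/-- Lower bound for the valuation of a limit. -/
lemma lim_ge (hv : IsCDVField val) {u : ℕ → K} {l : K}
    (hl : ∀ M : ℤ, ∃ N : ℕ, ∀ p, N ≤ p → (M : WithTop ℤ) ≤ val (u p - l))
    {c : ℚ} {N0 : ℕ} (hc : ∀ p, N0 ≤ p → (c : WithTop ℚ) ≤ valQ val (u p)) :
    (c : WithTop ℚ) ≤ valQ val l := by
  obtain ⟨N, hN⟩ := hl ⌈c⌉
  set p : ℕ := max N N0 with hp
  have h1 : (c : WithTop ℚ) ≤ valQ val (u p - l) := by
    refine le_trans ?_ (le_valQ_iff.2 (hN p (le_max_left _ _)))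
    exact_mod_cast WithTop.coe_le_coe.2 (Int.le_ceil c)
  have h2 : (c : WithTop ℚ) ≤ valQ val (u p) := hc p (le_max_right _ _)
  have h3 : l = u p - (u p - l) := by ring
  rw [h3]
  exact le_trans (le_min h2 h1) (valQ_min_le_sub hv _ _)

lemma step_some {f : MvPowerSeries (Fin n) K} {d : Fin s × K × (Fin n →₀ ℕ)}
    (h : (step val r mo A g f).2 = some d) :
    Pred val r mo A g f d ∧
      (step val r mo A g f).1 = f - (MvPowerSeries.monomial d.2.2) d.2.1 * g d.1 := by
  by_cases hc : ∃ d', Pred val r mo A g f d'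
  · obtain ⟨d', h2, hp, h1⟩ := step_spec hc
    rw [h2] at h
    obtain rfl := Option.some_inj.1 h
    exact ⟨hp, h1⟩
  · rw [step_none hc] at h
    exact absurd h (by simp)

variable (val r mo A g)

/-- The `m`-th quotient term attributed to `g k`. -/
noncomputable def TMq (f0 : MvPowerSeries (Fin n) K) (k : Fin s) (m : ℕ) :
    MvPowerSeries (Fin n) K :=
  ((step val r mo A g (F val r mo A g f0 m)).2).elim 0
    (fun d => if d.1 = k then (MvPowerSeries.monomial d.2.2) d.2.1 else 0)

/-- Partial quotients. -/
noncomputable def QS (f0 : MvPowerSeries (Fin n) K) (k : Fin s) (M : ℕ) :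
    MvPowerSeries (Fin n) K :=
  ∑ m ∈ Finset.range M, TMq val r mo A g f0 k m

/-- The exponent used at step `m`. -/
noncomputable def el (f0 : MvPowerSeries (Fin n) K) (m : ℕ) : Fin n →₀ ℕ :=
  ((step val r mo A g (F val r mo A g f0 m)).2).elim 0 (fun d => d.2.2)

variable {val r mo A g}
variable {f0 : MvPowerSeries (Fin n) K}

/-- Nonzero coefficients of `TMq` come from an actual reduction step. -/
lemma TMq_coeff {k : Fin s} {m : ℕ} {e : Fin n →₀ ℕ}
    (h : MvPowerSeries.coeff e (TMq val r mo A g f0 k m) ≠ 0) :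
    ∃ d, (step val r mo A g (F val r mo A g f0 m)).2 = some d ∧
      Pred val r mo A g (F val r mo A g f0 m) d ∧ d.1 = k ∧ d.2.2 = e ∧
      MvPowerSeries.coeff e (TMq val r mo A g f0 k m) = d.2.1 := by
  classical
  rcases hs : (step val r mo A g (F val r mo A g f0 m)).2 with _ | d
  · rw [TMq, hs, Option.elim_none] at h
    exact absurd (map_zero _) h
  · rw [TMq, hs, Option.elim_some] at h
    by_cases hk : d.1 = k
    · rw [if_pos hk] at h
      rw [MvPowerSeries.coeff_monomial] at h
      by_cases he : e = d.2.2
      · refine ⟨d, rfl, (step_some hs).1, hk, he.symm, ?_⟩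
        rw [TMq, hs, Option.elim_some, if_pos hk, MvPowerSeries.coeff_monomial, if_pos he]
      · rw [if_neg he] at h
        exact absurd rfl h
    · rw [if_neg hk] at h
      exact absurd (map_zero _) h

/-- Sum of quotient terms recovers the step difference. -/
lemma TMq_sum (m : ℕ) :
    ∑ k, TMq val r mo A g f0 k m * g k
      = F val r mo A g f0 m - F val r mo A g f0 (m + 1) := by
  classical
  have hF : F val r mo A g f0 (m+1) = (step val r mo A g (F val r mo A g f0 m)).1 := rfl
  rcases hs : (step val r mo A g (F val r mo A g f0 m)).2 with _ | d
  · have : step val r mo A g (F val r mo A g f0 m) = ((step val r mo A g (F val r mo A g f0 m)).1, none) := by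
      rw [← hs]
    by_cases hc : ∃ d', Pred val r mo A g (F val r mo A g f0 m) d'
    · obtain ⟨d', h2, _, _⟩ := step_spec hc
      rw [hs] at h2
      exact absurd h2 (by simp)
    · rw [hF, step_none hc]
      simp only [TMq, step_none hc]
      simp
  · obtain ⟨hpred, h1⟩ := step_some hs
    rw [hF, h1, sub_sub_cancel]
    rw [Finset.sum_eq_single_of_mem d.1 (Finset.mem_univ _)]
    · rw [TMq, hs, Option.elim_some, if_pos rfl]
    · intro k _ hk
      rw [TMq, hs, Option.elim_some, if_neg (Ne.symm hk), zero_mul]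

/-- Telescoping: the partial quotients reconstruct `f0` up to the remainder. -/
lemma QS_sum (M : ℕ) :
    ∑ k, QS val r mo A g f0 k M * g k = f0 - F val r mo A g f0 M := by
  classical
  have h1 : ∑ k, QS val r mo A g f0 k M * g k
      = ∑ m ∈ Finset.range M, ∑ k, TMq val r mo A g f0 k m * g k := by
    rw [Finset.sum_comm]
    refine Finset.sum_congr rfl fun k _ => ?_
    rw [QS, Finset.sum_mul]
  rw [h1]
  have h2 : ∀ m ∈ Finset.range M, ∑ k, TMq val r mo A g f0 k m * g k
      = F val r mo A g f0 m - F val r mo A g f0 (m+1) := fun m _ => TMq_sum m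
  rw [Finset.sum_congr rfl h2, Finset.sum_range_sub']
  rfl

section WithHyp
variable (hv : IsCDVField val) (hmo : IsMonomialOrder mo)
  (hJ : IsIdealOf A J)
  (HC : ∀ f ∈ J, f ≠ 0 → ∃ d, Pred val r mo A g f d)
  (hgJ : ∀ k, g k ∈ J) (hg0 : ∀ k, g k ≠ 0)
  (hf0 : f0 ∈ J)
include hv hmo hJ HC hgJ hg0 hf0

/-- The terms extracted at step `m` have `val_r` going to `+∞`. -/
lemma conv2 : ∀ C : ℚ, ∃ N : ℕ, ∀ m, N ≤ m → ∀ d,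
    (step val r mo A g (F val r mo A g f0 m)).2 = some d →
    (C : WithTop ℚ) ≤ tval val r d.2.1 d.2.2 := by
  intro C
  -- a uniform upper bound for the leading values of the `g k`
  have hge : ∀ k, ∃ e, MvPowerSeries.coeff e (g k) ≠ 0 := by
    intro k
    by_contra h
    push_neg at h
    exact hg0 k (MvPowerSeries.ext fun e => by rw [h e, map_zero])
  choose ge hge using hge
  have hwk : ∀ k, ∃ w : ℚ, (w : WithTop ℚ) = cval val r (g k) (ge k) := by
    intro k
    refine WithTop.ne_top_iff_exists.1 fun h => hge k ((cval_eq_top_iff hv).1 h)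
  choose wk hwk using hwk
  obtain ⟨W, hW⟩ := Finite.exists_le wk
  obtain ⟨N, hN⟩ := conv1 hJ HC hgJ hf0 hv hmo (C + W)
  refine ⟨N, fun m hm d hd => ?_⟩
  obtain ⟨hpred, _⟩ := step_some hd
  obtain ⟨a, i, b, j, hfa, hgb, hij, hc, _⟩ := hpred
  have hb : b ≠ 0 := hgb.2.1
  have ha : a = d.2.1 * b := by rw [hc, inv_mul_cancel_right₀ hb]
  have hii : i = d.2.2 + j := by rw [hij, add_comm]
  have htv : tval val r a i = tval val r d.2.1 d.2.2 + tval val r b j := by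
    rw [ha, hii, tval_mul hv]
  have hbound : ((C + W : ℚ) : WithTop ℚ) ≤ tval val r a i := by
    have := hN m hm i
    rwa [cval, hfa.1] at this
  have hbj : tval val r b j ≤ (W : WithTop ℚ) := by
    refine le_trans (le_trans (ilt_le hv hgb (ge d.1)) (le_of_eq (hwk d.1).symm)) ?_
    exact_mod_cast WithTop.coe_le_coe.2 (hW d.1)
  by_contra hlt
  push_neg at hlt
  have := wtop_add_lt hlt hbj
  rw [← htv] at this
  exact absurd hbound (not_le_of_gt this)

/-- Valuation bound for the coefficients of the quotient terms. -/
lemma valbound : ∀ C : ℚ, ∃ N : ℕ, ∀ m, N ≤ m → ∀ k e,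
    ((C + wt r e : ℚ) : WithTop ℚ)
      ≤ valQ val (MvPowerSeries.coeff e (TMq val r mo A g f0 k m)) := by
  intro C
  obtain ⟨N, hN⟩ := conv2 hv hmo hJ HC hgJ hg0 hf0 C
  refine ⟨N, fun m hm k e => ?_⟩
  rcases eq_or_ne (MvPowerSeries.coeff e (TMq val r mo A g f0 k m)) 0 with h0 | h0
  · rw [h0, valQ_zero hv]
    exact le_top
  · obtain ⟨d, hd, _, _, hde, hcoe⟩ := TMq_coeff h0
    rw [hcoe, valQ_eq_tval_add (r := r) d.2.1 e, ← hde, WithTop.coe_add]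
    exact add_le_add_left (hde ▸ hN m hm d hd) _

end WithHyp
end Quot
end S7
namespace S7
section Main
variable {K : Type*} [Field K] {n : ℕ}
variable {val : K → WithTop ℤ} {r : Fin n → ℚ}
  {mo : (Fin n →₀ ℕ) → (Fin n →₀ ℕ) → Prop}
  {A J : Set (MvPowerSeries (Fin n) K)} {s : ℕ} {g : Fin s → MvPowerSeries (Fin n) K}
  {f0 : MvPowerSeries (Fin n) K}

lemma monomial_mem_tateInt (hv : IsCDVField val) {c : K} {l : Fin n →₀ ℕ}
    (hint : (0 : WithTop ℚ) ≤ tval val r c l) :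
    (MvPowerSeries.monomial l) c ∈ TateIntSet val r := by
  classical
  refine ⟨isTate_monomial hv c l, fun e => ?_⟩
  rw [cval, MvPowerSeries.coeff_monomial]
  by_cases he : e = l
  · rw [if_pos he, he]
    exact hint
  · rw [if_neg he, tval_zero hv]
    exact le_top

theorem main_lemma (hv : IsCDVField val) (hmo : IsMonomialOrder mo)
    (hA : A = TateSet val r ∨ A = TateIntSet val r)
    (hJ : IsIdealOf A J)
    (HC : ∀ f ∈ J, f ≠ 0 → ∃ d, Pred val r mo A g f d)
    (hgJ : ∀ k, g k ∈ J) (hg0 : ∀ k, g k ≠ 0)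
    (hf0 : f0 ∈ J) :
    ∃ q : Fin s → MvPowerSeries (Fin n) K, (∀ k, q k ∈ A) ∧ f0 = ∑ k, q k * g k := by
  classical
  set ps : Fin s → (Fin n →₀ ℕ) → ℕ → K :=
    fun k e M => MvPowerSeries.coeff e (QS val r mo A g f0 k M) with hpsdef
  have hps : ∀ k e M, ps k e M
      = ∑ m ∈ Finset.range M, MvPowerSeries.coeff e (TMq val r mo A g f0 k m) := by
    intro k e M
    rw [hpsdef]
    show MvPowerSeries.coeff e (QS val r mo A g f0 k M) = _
    rw [QS, map_sum]
  have hVB := valbound hv hmo hJ HC hgJ hg0 hf0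
  -- Cauchy property of the partial quotient coefficients
  have hcauchy : ∀ k e, ∀ M : ℤ, ∃ N : ℕ, ∀ p, N ≤ p → ∀ q', N ≤ q' →
      (M : WithTop ℤ) ≤ val (ps k e p - ps k e q') := by
    intro k e M
    obtain ⟨N, hN⟩ := hVB ((M : ℚ) - wt r e)
    have hterm : ∀ m, N ≤ m →
        (((M : ℚ) : ℚ) : WithTop ℚ) ≤ valQ val (MvPowerSeries.coeff e (TMq val r mo A g f0 k m)) := by
      intro m hm
      have h := hN m hm k e
      rwa [sub_add_cancel] at h
    have key : ∀ p q', N ≤ p → N ≤ q' → q' ≤ p →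
        (M : WithTop ℤ) ≤ val (ps k e p - ps k e q') := by
      intro p q' hp hq' hle
      rw [← le_valQ_iff]
      rw [hps, hps, ← Finset.sum_Ico_eq_sub _ hle]
      exact valQ_sum hv _ _ _ fun m hm => hterm m (le_trans hq' (Finset.mem_Ico.1 hm).1)
    refine ⟨N, fun p hp q' hq' => ?_⟩
    rcases le_total q' p with h | h
    · exact key p q' hp hq' h
    · have hsymm : ps k e p - ps k e q' = -(ps k e q' - ps k e p) := by ring
      rw [hsymm, val_neg hv]
      exact key q' p hq' hp h
  have hlim : ∀ k e, ∃ l : K, ∀ M : ℤ, ∃ N : ℕ, ∀ p, N ≤ p →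
      (M : WithTop ℤ) ≤ val (ps k e p - l) :=
    fun k e => hv.complete _ (hcauchy k e)
  choose L hL using hlim
  set q : Fin s → MvPowerSeries (Fin n) K := fun k e => L k e with hqdef
  have hqcoeff : ∀ k e, MvPowerSeries.coeff e (q k) = L k e := fun k e => rfl
  -- Tateness of the quotients
  have hqtate : ∀ k, IsTate val r (q k) := by
    intro k C
    obtain ⟨N, hN⟩ := hVB C
    apply Set.Finite.subset ((Set.finite_Iio N).image (el val r mo A g f0))
    intro e he
    have he' : cval val r (q k) e < (C : WithTop ℚ) := he
    by_contra hmem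
    have hzero : ∀ m, m < N → MvPowerSeries.coeff e (TMq val r mo A g f0 k m) = 0 := by
      intro m hm
      by_contra h0
      obtain ⟨d, hd, _, _, hde, _⟩ := TMq_coeff h0
      exact hmem ⟨m, hm, by rw [el, hd, Option.elim_some, hde]⟩
    have hub : ∀ p, (0:ℕ) ≤ p →
        ((C + wt r e : ℚ) : WithTop ℚ) ≤ valQ val (ps k e p) := by
      intro p _
      rw [hps]
      refine valQ_sum hv _ _ _ fun m hm => ?_
      rcases lt_or_ge m N with h | h
      · rw [hzero m h, valQ_zero hv]; exact le_top
      · exact hN m h k e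
    have hlge := lim_ge hv (hL k e) hub
    have hcv : (C : WithTop ℚ) ≤ cval val r (q k) e := by
      have h2 : cval val r (q k) e = valQ val (L k e) + ((-wt r e : ℚ) : WithTop ℚ) := by
        rw [cval, tval, hqcoeff]
      rw [h2]
      calc (C : WithTop ℚ)
          = ((C + wt r e : ℚ) : WithTop ℚ) + ((-wt r e : ℚ) : WithTop ℚ) := by
            rw [← WithTop.coe_add]; norm_num
        _ ≤ valQ val (L k e) + ((-wt r e : ℚ) : WithTop ℚ) := add_le_add_left hlge _
    exact absurd he' (not_lt_of_ge hcv)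
  -- Membership in `A`
  have hqA : ∀ k, q k ∈ A := by
    rcases hA with hA1 | hA1
    · exact fun k => by rw [hA1]; exact hqtate k
    · intro k
      rw [hA1]
      refine ⟨hqtate k, fun e => ?_⟩
      have hub : ∀ p, (0:ℕ) ≤ p →
          ((wt r e : ℚ) : WithTop ℚ) ≤ valQ val (ps k e p) := by
        intro p _
        rw [hps]
        refine valQ_sum hv _ _ _ fun m hm => ?_
        rcases eq_or_ne (MvPowerSeries.coeff e (TMq val r mo A g f0 k m)) 0 with h0 | h0
        · rw [h0, valQ_zero hv]; exact le_top
        · obtain ⟨d, hd, hpred, hdk, hde, hcoe⟩ := TMq_coeff h0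
          obtain ⟨a, i, b, j, _, _, _, _, hmem⟩ := hpred
          rw [hA1] at hmem
          have hint := hmem.2 d.2.2
          rw [cval, MvPowerSeries.coeff_monomial, if_pos rfl] at hint
          rw [hcoe, valQ_eq_tval_add (r := r) d.2.1 e, ← hde]
          calc ((wt r d.2.2 : ℚ) : WithTop ℚ)
              = 0 + ((wt r d.2.2 : ℚ) : WithTop ℚ) := (zero_add _).symm
            _ ≤ tval val r d.2.1 d.2.2 + ((wt r d.2.2 : ℚ) : WithTop ℚ) :=
                add_le_add_left hint _
      have hlge := lim_ge hv (hL k e) hub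
      have h2 : cval val r (q k) e = valQ val (L k e) + ((-wt r e : ℚ) : WithTop ℚ) := by
        rw [cval, tval, hqcoeff]
      rw [h2]
      calc (0 : WithTop ℚ)
          = ((wt r e : ℚ) : WithTop ℚ) + ((-wt r e : ℚ) : WithTop ℚ) := by
            rw [← WithTop.coe_add]; norm_num
        _ ≤ valQ val (L k e) + ((-wt r e : ℚ) : WithTop ℚ) := add_le_add_left hlge _
  -- The decomposition identity
  refine ⟨q, hqA, ?_⟩
  apply MvPowerSeries.ext
  intro e
  rw [map_sum]
  have hT : ∀ c : ℚ, (c : WithTop ℚ)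
      ≤ valQ val (MvPowerSeries.coeff e f0 - ∑ k, MvPowerSeries.coeff e (q k * g k)) := by
    intro c
    obtain ⟨N1, hN1⟩ := conv1 hJ HC hgJ hf0 hv hmo (c - wt r e)
    have hpair : ∀ kp : Fin s × ((Fin n →₀ ℕ) × (Fin n →₀ ℕ)), ∃ Nk : ℕ, ∀ P, Nk ≤ P →
        (c : WithTop ℚ) ≤ valQ val
          ((ps kp.1 kp.2.1 P - L kp.1 kp.2.1) * MvPowerSeries.coeff kp.2.2 (g kp.1)) := by
      intro kp
      rcases eq_or_ne (MvPowerSeries.coeff kp.2.2 (g kp.1)) 0 with h0 | h0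
      · exact ⟨0, fun P _ => by rw [h0, mul_zero, valQ_zero hv]; exact le_top⟩
      · obtain ⟨z, hz⟩ := WithTop.ne_top_iff_exists.1 (val_ne_top hv h0)
        obtain ⟨N, hN⟩ := hL kp.1 kp.2.1 ⌈c - (z : ℚ)⌉
        refine ⟨N, fun P hP => ?_⟩
        rw [valQ_mul hv]
        have h1 : (((⌈c - (z : ℚ)⌉ : ℤ) : ℚ) : WithTop ℚ)
            ≤ valQ val (ps kp.1 kp.2.1 P - L kp.1 kp.2.1) := le_valQ_iff.2 (hN P hP)
        have h2 : valQ val (MvPowerSeries.coeff kp.2.2 (g kp.1)) = ((z : ℚ) : WithTop ℚ) := by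
          rw [valQ, ← hz, WithTop.map_coe]
        rw [h2]
        have h3 : c ≤ ((⌈c - (z : ℚ)⌉ : ℤ) : ℚ) + (z : ℚ) := by
          have := Int.le_ceil (c - (z : ℚ))
          linarith
        calc (c : WithTop ℚ)
            ≤ ((((⌈c - (z : ℚ)⌉ : ℤ) : ℚ) + (z : ℚ) : ℚ) : WithTop ℚ) := by
              exact_mod_cast WithTop.coe_le_coe.2 h3
          _ = (((⌈c - (z : ℚ)⌉ : ℤ) : ℚ) : WithTop ℚ) + ((z : ℚ) : WithTop ℚ) :=
              WithTop.coe_add _ _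
          _ ≤ valQ val (ps kp.1 kp.2.1 P - L kp.1 kp.2.1) + ((z : ℚ) : WithTop ℚ) :=
              add_le_add_left h1 _
    choose Nf hNf using hpair
    set P : ℕ := max N1 ((Finset.univ ×ˢ Finset.HasAntidiagonal.antidiagonal e).sup Nf) with hPdef
    have hdec : MvPowerSeries.coeff e f0 - ∑ k, MvPowerSeries.coeff e (q k * g k)
        = (∑ k, ∑ p ∈ Finset.HasAntidiagonal.antidiagonal e,
            (ps k p.1 P - L k p.1) * MvPowerSeries.coeff p.2 (g k))
          + MvPowerSeries.coeff e (F val r mo A g f0 P) := by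
      have h1 := QS_sum (val := val) (r := r) (mo := mo) (A := A) (g := g) (f0 := f0) P
      have h2 : MvPowerSeries.coeff e f0
          = (∑ k, MvPowerSeries.coeff e (QS val r mo A g f0 k P * g k))
            + MvPowerSeries.coeff e (F val r mo A g f0 P) := by
        have h := congrArg (MvPowerSeries.coeff e) h1
        rw [map_sum, map_sub] at h
        have := eq_sub_iff_add_eq.1 h
        linear_combination -this
      have h3 : ∀ k, MvPowerSeries.coeff e (QS val r mo A g f0 k P * g k)
          = ∑ p ∈ Finset.HasAntidiagonal.antidiagonal e, ps k p.1 P * MvPowerSeries.coeff p.2 (g k) := by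
        intro k
        rw [MvPowerSeries.coeff_mul]
      have h4 : ∀ k, MvPowerSeries.coeff e (q k * g k)
          = ∑ p ∈ Finset.HasAntidiagonal.antidiagonal e, L k p.1 * MvPowerSeries.coeff p.2 (g k) := by
        intro k
        rw [MvPowerSeries.coeff_mul]
        exact Finset.sum_congr rfl fun p _ => by rw [hqcoeff]
      rw [h2, Finset.sum_congr rfl fun k _ => h4 k]
      rw [Finset.sum_congr rfl fun k _ => h3 k]
      rw [add_sub_right_comm, ← Finset.sum_sub_distrib]
      congr 1
      refine Finset.sum_congr rfl fun k _ => ?_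
      rw [← Finset.sum_sub_distrib]
      exact Finset.sum_congr rfl fun p _ => (sub_mul _ _ _).symm
    rw [hdec]
    refine le_trans (le_min ?_ ?_) (valQ_min_le_add hv _ _)
    · refine valQ_sum hv _ _ _ fun k _ => valQ_sum hv _ _ _ fun p hp => ?_
      refine hNf (k, p) P (le_trans ?_ (le_max_right _ _))
      exact Finset.le_sup (Finset.mem_product.2 ⟨Finset.mem_univ _, hp⟩)
    · have h := hN1 P (le_max_left _ _) e
      rw [valQ_eq_tval_add (r := r) _ e]
      calc (c : WithTop ℚ)
          = ((c - wt r e : ℚ) : WithTop ℚ) + ((wt r e : ℚ) : WithTop ℚ) := by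
            rw [← WithTop.coe_add]; norm_num
        _ ≤ cval val r (F val r mo A g f0 P) e + ((wt r e : ℚ) : WithTop ℚ) :=
            add_le_add_left h _
  -- conclude equality of coefficients
  by_contra hne
  have hx : MvPowerSeries.coeff e f0 - ∑ k, MvPowerSeries.coeff e (q k * g k) ≠ 0 :=
    fun h => hne (sub_eq_zero.1 h)
  obtain ⟨t, ht⟩ := WithTop.ne_top_iff_exists.1 (valQ_ne_top hv hx)
  have := hT (t + 1)
  rw [← ht, WithTop.coe_le_coe] at this
  linarith

end Main
end S7
/-- a Gröbner basis of an ideal `J` of `K{X;r}` (resp. of `K{X;r}°`)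
generates `J`. -/
theorem statement7 (val : K → WithTop ℤ) (hval : IsCDVField val) (r : Fin n → ℚ)
    (mo : (Fin n →₀ ℕ) → (Fin n →₀ ℕ) → Prop) (hmo : IsMonomialOrder mo) :
    (∀ J : Set (MvPowerSeries (Fin n) K), IsIdealOf (TateSet val r) J →
      ∀ (s : ℕ) (g : Fin s → MvPowerSeries (Fin n) K), IsGB val r mo J g →
        ∀ f ∈ J, ∃ q : Fin s → MvPowerSeries (Fin n) K,
          (∀ k, q k ∈ TateSet val r) ∧ f = ∑ k, q k * g k) ∧
    (∀ J : Set (MvPowerSeries (Fin n) K), IsIdealOf (TateIntSet val r) J →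
      ∀ (s : ℕ) (g : Fin s → MvPowerSeries (Fin n) K), IsGBInt val r mo J g →
        ∀ f ∈ J, ∃ q : Fin s → MvPowerSeries (Fin n) K,
          (∀ k, q k ∈ TateIntSet val r) ∧ f = ∑ k, q k * g k) := by
  constructor
  · intro J hJ s g hGB f hf
    have hg0 : ∀ k, g k ≠ 0 := fun k => (hGB.1 k).2
    have hgJ : ∀ k, g k ∈ J := fun k => (hGB.1 k).1
    have HC : ∀ f' ∈ J, f' ≠ 0 → ∃ d, S7.Pred val r mo (TateSet val r) g f' d := by
      intro f' hf' hne
      have hft : IsTate val r f' := hJ.subset hf'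
      obtain ⟨a, i, hilt⟩ := S7.exists_ilt hval hmo hft hne
      obtain ⟨k, b, j, hgilt, hdiv⟩ := hGB.2 f' hf' a i hilt
      obtain ⟨hb, ha, l, hl⟩ := hdiv
      exact ⟨(k, a * b⁻¹, l), a, i, b, j, hilt, hgilt, hl, rfl,
        S7.isTate_monomial hval _ _⟩
    exact S7.main_lemma hval hmo (Or.inl rfl) hJ HC hgJ hg0 hf
  · intro J hJ s g hGB f hf
    have hg0 : ∀ k, g k ≠ 0 := fun k => (hGB.1 k).2
    have hgJ : ∀ k, g k ∈ J := fun k => (hGB.1 k).1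
    have HC : ∀ f' ∈ J, f' ≠ 0 → ∃ d, S7.Pred val r mo (TateIntSet val r) g f' d := by
      intro f' hf' hne
      have hft : IsTate val r f' := (hJ.subset hf').1
      obtain ⟨a, i, hilt⟩ := S7.exists_ilt hval hmo hft hne
      obtain ⟨k, b, j, hgilt, hdiv⟩ := hGB.2 f' hf' a i hilt
      obtain ⟨hb, ha, l, hl, hint⟩ := hdiv
      exact ⟨(k, a * b⁻¹, l), a, i, b, j, hilt, hgilt, hl, rfl,
        S7.monomial_mem_tateInt hval hint⟩
    exact S7.main_lemma hval hmo (Or.inr rfl) hJ HC hgJ hg0 hf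
end
end

section
/- Let I be an ideal of K{X;r}° and let G be a Gröbner basis of I. Then G is also a Gröbner basis of the ideal J = I·K{X;r} of K{X;r} generated by I (equivalently, J = I[1/π]). -/
open MvPowerSeries

noncomputable section

variable {K : Type*} [Field K] {n : ℕ}

lemma valQ_mul {val : K → WithTop ℤ} (hval : IsCDVField val) (x y : K) :
    valQ val (x * y) = valQ val x + valQ val y := by
  unfold valQ
  rw [hval.map_mul]
  cases hx : val x with
  | top => simp
  | coe a =>
    cases hy : val y with
    | top => simp
    | coe b => simp [← WithTop.coe_add]

lemma valQ_ne_top {val : K → WithTop ℤ} (hval : IsCDVField val) {c : K} (hc : c ≠ 0) :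
    valQ val c ≠ ⊤ := by
  unfold valQ
  intro h
  exact hc ((hval.eq_top_iff c).mp (by simpa using h))

lemma tval_const_mul {val : K → WithTop ℤ} (hval : IsCDVField val) (r : Fin n → ℚ)
    (c x : K) (i : Fin n →₀ ℕ) :
    tval val r (c * x) i = valQ val c + tval val r x i := by
  unfold tval
  rw [valQ_mul hval, add_assoc]

lemma termLt_const_mul {val : K → WithTop ℤ} (hval : IsCDVField val) (r : Fin n → ℚ)
    (mo : (Fin n →₀ ℕ) → (Fin n →₀ ℕ) → Prop) {c : K} (hc : c ≠ 0)
    {x : K} {j : Fin n →₀ ℕ} {y : K} {i : Fin n →₀ ℕ}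
    (h : TermLt val r mo x j y i) : TermLt val r mo (c * x) j (c * y) i := by
  rcases h with h | ⟨h1, h2, h3⟩
  · left
    rw [tval_const_mul hval, tval_const_mul hval]
    rcases WithTop.ne_top_iff_exists.mp (valQ_ne_top hval hc) with ⟨v, hv⟩
    rw [← hv, add_comm _ (tval val r x j), add_comm _ (tval val r y i)]
    exact (WithTop.add_lt_add_iff_right (WithTop.coe_ne_top)).mpr h
  · right
    exact ⟨by rw [tval_const_mul hval, tval_const_mul hval, h1], h2, h3⟩

lemma isLeadingTerm_const_mul {val : K → WithTop ℤ} (hval : IsCDVField val) (r : Fin n → ℚ)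
    (mo : (Fin n →₀ ℕ) → (Fin n →₀ ℕ) → Prop) {c : K} (hc : c ≠ 0)
    {f : MvPowerSeries (Fin n) K} {a : K} {i : Fin n →₀ ℕ}
    (h : IsLeadingTerm val r mo f a i) :
    IsLeadingTerm val r mo (MvPowerSeries.C (σ := Fin n) (R := K) c * f) (c * a) i := by
  obtain ⟨hcoeff, ha, hlt⟩ := h
  refine ⟨by rw [MvPowerSeries.coeff_C_mul, hcoeff], mul_ne_zero hc ha, ?_⟩
  intro j hj hji
  rw [MvPowerSeries.coeff_C_mul] at hj ⊢
  have hxj : MvPowerSeries.coeff j f ≠ 0 := fun h0 => hj (by rw [h0, mul_zero])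
  exact termLt_const_mul hval r mo hc (hlt j hxj hji)

/-- a Gröbner basis of an ideal `I` of `K{X;r}°` is also a Gröbner
basis of the ideal `J = I·K{X;r} = I[1/π]` of `K{X;r}`. -/
theorem statement12 (val : K → WithTop ℤ) (hval : IsCDVField val)
    (π : K) (hπ : val π = (1 : ℤ)) (r : Fin n → ℚ)
    (mo : (Fin n →₀ ℕ) → (Fin n →₀ ℕ) → Prop) (hmo : IsMonomialOrder mo)
    (I : Set (MvPowerSeries (Fin n) K)) (hI : IsIdealOf (TateIntSet val r) I)
    (s : ℕ) (g : Fin s → MvPowerSeries (Fin n) K) (hg : IsGBInt val r mo I g) :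
    IsGB val r mo
      {f | IsTate val r f ∧ ∃ k : ℕ, (MvPowerSeries.C (σ := Fin n) (R := K) (π ^ k)) * f ∈ I} g := by
  have hπ0 : π ≠ 0 := fun h => by
    rw [h, (hval.eq_top_iff 0).mpr rfl] at hπ; exact WithTop.top_ne_coe hπ
  constructor
  · intro k
    refine ⟨⟨(hI.subset (hg.1 k).1).1, 0, ?_⟩, (hg.1 k).2⟩
    simpa using (hg.1 k).1
  · rintro f ⟨-, k, hfk⟩ a i hlead
    have hπk : π ^ k ≠ 0 := pow_ne_zero k hπ0
    have hlead' := isLeadingTerm_const_mul hval r mo hπk hlead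
    obtain ⟨k', b, j, hgb, hdiv⟩ := hg.2 _ hfk _ _ hlead'
    obtain ⟨hb, -, m, hm, -⟩ := hdiv
    exact ⟨k', b, j, hgb, hb, hlead.2.1, m, hm⟩
end
end

section
/- Let J be an ideal of K{X;r} and let G = (g_1,…,g_s) be a Gröbner basis (resp. a minimal Gröbner basis) of J such that val_r(g_i) = 0 for all i. Then G is a Gröbner basis (resp. a minimal Gröbner basis) of the ideal J° = J ∩ K{X;r}° of K{X;r}°. -/
open MvPowerSeries

noncomputable section

variable {K : Type*} [Field K] {n : ℕ}

lemma val_coe {val : K → WithTop ℤ} (hval : IsCDVField val) {a : K} (ha : a ≠ 0) :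
    ∃ m : ℤ, val a = (m : WithTop ℤ) := by
  cases h : val a with
  | top => exact absurd ((hval.eq_top_iff a).mp h) ha
  | coe m => exact ⟨m, rfl⟩

lemma wt_add (r : Fin n → ℚ) (i j : Fin n →₀ ℕ) : wt r (i + j) = wt r i + wt r j := by
  unfold wt
  rw [← Finset.sum_add_distrib]
  refine Finset.sum_congr rfl fun x _ => ?_
  simp only [Finsupp.add_apply]
  push_cast
  ring

lemma tval_eq {val : K → WithTop ℤ} (r : Fin n → ℚ) {a : K} {m : ℤ}
    (hma : val a = (m : WithTop ℤ)) (i : Fin n →₀ ℕ) :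
    tval val r a i = (((m : ℚ) - wt r i : ℚ) : WithTop ℚ) := by
  unfold tval valQ
  rw [hma, WithTop.map_coe, ← WithTop.coe_add]
  congr 1
  ring

lemma tval_zero_top {val : K → WithTop ℤ} (hval : IsCDVField val) (r : Fin n → ℚ)
    (i : Fin n →₀ ℕ) : tval val r (0 : K) i = ⊤ := by
  unfold tval valQ
  rw [(hval.eq_top_iff 0).mpr rfl]
  rfl

/-- The leading term of a series of Gauss valuation 0 has `tval = 0`. -/
lemma lt_tval_zero {val : K → WithTop ℤ} (hval : IsCDVField val) {r : Fin n → ℚ}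
    {mo : (Fin n →₀ ℕ) → (Fin n →₀ ℕ) → Prop} {f : MvPowerSeries (Fin n) K}
    {a : K} {i : Fin n →₀ ℕ}
    (hg0 : GaussValEq val r f 0) (hlt : IsLeadingTerm val r mo f a i) :
    tval val r a i = (((0 : ℚ)) : WithTop ℚ) := by
  obtain ⟨h1, i0, h2⟩ := hg0
  have hcv : cval val r f i = tval val r a i := by rw [cval, hlt.1]
  have hge : (((0 : ℚ)) : WithTop ℚ) ≤ tval val r a i := hcv ▸ h1 i
  by_cases hii : i0 = i
  · rw [← hcv, ← hii]; exact h2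
  · have hc0 : MvPowerSeries.coeff i0 f ≠ 0 := by
      intro h
      rw [cval, h, tval_zero_top hval] at h2
      exact absurd h2.symm (by simp)
    rcases hlt.2.2 i0 hc0 hii with h | h
    · rw [cval] at h2
      rw [h2] at h
      exact absurd (lt_of_le_of_lt hge h) (lt_irrefl _)
    · rw [← h.1, ← cval]; exact h2

/-- Uniqueness of the leading term. -/
lemma lt_unique {val : K → WithTop ℤ} {r : Fin n → ℚ}
    {mo : (Fin n →₀ ℕ) → (Fin n →₀ ℕ) → Prop} (hmo : IsMonomialOrder mo)
    {f : MvPowerSeries (Fin n) K} {a b : K} {i j : Fin n →₀ ℕ}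
    (h1 : IsLeadingTerm val r mo f a i) (h2 : IsLeadingTerm val r mo f b j) : i = j := by
  by_contra hij
  have hA : TermLt val r mo b j a i := by
    have := h1.2.2 j (h2.1 ▸ h2.2.1) (fun h => hij h.symm)
    rwa [h2.1] at this
  have hB : TermLt val r mo a i b j := by
    have := h2.2.2 i (h1.1 ▸ h1.2.1) hij
    rwa [h1.1] at this
  rcases hA with hA | ⟨hA1, hA2, hA3⟩ <;> rcases hB with hB | ⟨hB1, hB2, hB3⟩
  · exact absurd (hA.trans hB) (lt_irrefl _)
  · exact absurd (hB1 ▸ hA) (lt_irrefl _)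
  · exact absurd (hA1 ▸ hB) (lt_irrefl _)
  · exact hij (hmo.antisymm i j hB3 hA3)

/-- Key computation: the `tval` of the quotient term. -/
lemma tval_div {val : K → WithTop ℤ} (hval : IsCDVField val) (r : Fin n → ℚ)
    {a b : K} {i j k : Fin n →₀ ℕ} (ha : a ≠ 0) (hb : b ≠ 0) (hij : i = j + k) {v : ℚ}
    (hvi : tval val r a i = (v : WithTop ℚ))
    (hvj : tval val r b j = (((0 : ℚ)) : WithTop ℚ)) :
    tval val r (a * b⁻¹) k = (v : WithTop ℚ) := by
  obtain ⟨ma, hma⟩ := val_coe hval ha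
  obtain ⟨mb, hmb⟩ := val_coe hval hb
  have hbinv : val b⁻¹ = ((-mb : ℤ) : WithTop ℤ) := by
    have hm := hval.map_mul b b⁻¹
    rw [mul_inv_cancel₀ hb, hval.map_one, hmb] at hm
    cases h : val b⁻¹ with
    | top => rw [h, add_top] at hm; exact absurd hm (by simp)
    | coe c =>
      rw [h, ← WithTop.coe_add] at hm
      have hc : mb + c = 0 := by exact_mod_cast hm.symm
      have hcc : c = -mb := by omega
      rw [hcc]
  have hab : val (a * b⁻¹) = ((ma - mb : ℤ) : WithTop ℤ) := by
    rw [hval.map_mul, hma, hbinv, ← WithTop.coe_add, sub_eq_add_neg]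
  have e1 : (ma : ℚ) - wt r i = v := by
    have := (tval_eq r hma i).symm.trans hvi
    exact_mod_cast this
  have e2 : (mb : ℚ) - wt r j = 0 := by
    have := (tval_eq r hmb j).symm.trans hvj
    exact_mod_cast this
  have e3 : wt r i = wt r j + wt r k := by rw [hij, wt_add]
  rw [tval_eq r hab k]
  congr 1
  push_cast
  linarith

/-- if `G` is a Gröbner basis (resp. a minimal Gröbner basis) of an
ideal `J` of `K{X;r}` with `val_r(g_i) = 0` for all `i`, then `G` is a Gröbner basis
(resp. a minimal Gröbner basis) of `J° = J ∩ K{X;r}°`. -/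
theorem statement13 (val : K → WithTop ℤ) (hval : IsCDVField val) (r : Fin n → ℚ)
    (mo : (Fin n →₀ ℕ) → (Fin n →₀ ℕ) → Prop) (hmo : IsMonomialOrder mo)
    (J : Set (MvPowerSeries (Fin n) K)) (hJ : IsIdealOf (TateSet val r) J)
    (s : ℕ) (g : Fin s → MvPowerSeries (Fin n) K)
    (hg0 : ∀ k, GaussValEq val r (g k) 0) :
    (IsGB val r mo J g → IsGBInt val r mo (J ∩ TateIntSet val r) g) ∧
    (IsMinGB val r mo J g → IsMinGBInt val r mo (J ∩ TateIntSet val r) g) := by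
  -- g k belongs to the integral Tate algebra
  have hgint : ∀ k, g k ∈ J → g k ∈ TateIntSet val r := by
    intro k hk
    refine ⟨hJ.subset hk, ?_⟩
    intro i
    simpa using (hg0 k).1 i
  have hGBpart : IsGB val r mo J g → IsGBInt val r mo (J ∩ TateIntSet val r) g := by
    rintro ⟨hmem, hdiv⟩
    constructor
    · intro k
      exact ⟨⟨(hmem k).1, hgint k (hmem k).1⟩, (hmem k).2⟩
    · intro f hf a i hlt
      obtain ⟨k, b, j, hgk, hb, ha, k', hk'⟩ := hdiv f hf.1 a i hlt
      refine ⟨k, b, j, hgk, hb, ha, k', hk', ?_⟩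
      have hbj := lt_tval_zero hval (hg0 k) hgk
      obtain ⟨ma, hma⟩ := val_coe hval ha
      have hvi := tval_eq (val := val) r hma i
      have hv0 : (((0 : ℚ)) : WithTop ℚ) ≤ tval val r a i := by
        have := hf.2.2 i
        rw [cval, hlt.1] at this
        exact_mod_cast this
      rw [tval_div hval r ha hb hk' hvi hbj]
      rw [hvi] at hv0
      exact_mod_cast hv0
  refine ⟨hGBpart, ?_⟩
  rintro ⟨hGB, e, he1, he2, he3⟩
  have hGBInt := hGBpart hGB
  refine ⟨hGBInt, fun k => (e k, 0), ?_, ?_, ?_⟩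
  · intro k
    obtain ⟨a, ha⟩ := he1 k
    refine ⟨a, ha, ?_⟩
    have := lt_tval_zero hval (hg0 k) ha
    exact_mod_cast this
  · intro k l h
    exact he2 (congrArg Prod.fst h)
  · -- range = SkelClass
    have hmemcl : ∀ k : Fin s, ((e k, (0 : ℚ)) : (Fin n →₀ ℕ) × ℚ) ∈
        LTClassSet val r mo (J ∩ TateIntSet val r) := by
      intro k
      obtain ⟨a, ha⟩ := he1 k
      exact ⟨a, ⟨g k, ⟨(hGB.1 k).1, hgint k (hGB.1 k).1⟩, ha⟩,
        by exact_mod_cast lt_tval_zero hval (hg0 k) ha⟩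
    ext c
    simp only [Set.mem_range]
    constructor
    · rintro ⟨k, rfl⟩
      refine ⟨hmemcl k, ?_⟩
      rintro ⟨j, w⟩ ⟨a', ⟨f', hf', hlt'⟩, htv'⟩ ⟨⟨k'', hk''⟩, hw0⟩
      -- w ≥ 0 since f' is integral
      have hw1 : (0 : ℚ) ≤ w := by
        have := hf'.2.2 j
        rw [cval, hlt'.1, htv'] at this
        exact_mod_cast this
      have hw : w = 0 := le_antisymm hw0 hw1
      -- j ∈ LTExpSet J
      have hjL : j ∈ LTExpSet val r mo J := ⟨a', f', hf'.1, hlt'⟩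
      have hek : e k ∈ SkelExp val r mo J := he3 ▸ Set.mem_range_self k
      have hje : j = e k := hek.2 j hjL ⟨k'', hk''⟩
      simp [hje, hw]
    · rintro ⟨⟨a, ⟨f, hf, hlt⟩, htv⟩, hmin⟩
      -- apply the Gröbner property of J
      obtain ⟨k, b, j, hgk, hb, ha, k', hk'⟩ := hGB.2 f hf.1 a c.1 hlt
      obtain ⟨a₀, ha₀⟩ := he1 k
      have hje : j = e k := lt_unique hmo hgk ha₀
      have hv0 : (0 : ℚ) ≤ c.2 := by
        have := hf.2.2 c.1
        rw [cval, hlt.1, htv] at this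
        exact_mod_cast this
      have hdvd : ClassDiv ((e k, (0 : ℚ)) : (Fin n →₀ ℕ) × ℚ) c :=
        ⟨⟨k', by rw [← hje]; exact hk'⟩, hv0⟩
      have := hmin (e k, 0) (hmemcl k) hdvd
      exact ⟨k, this⟩
end
end

section
/- Take r = (0,…,0). Let h_1,…,h_m be nonzero elements of K{X} and t_1,…,t_m terms such that the terms LT(t_1h_1),…,LT(t_mh_m) all coincide up to multiplication by units of K° (elements of valuation 0), and such that the sum Σ_{i=1}^m t_i h_i is zero or has leading term strictly smaller than LT(t_1h_1). Then there exist t'_1,…,t'_m, each a term or zero, such that Σ_{i=1}^m t_i h_i = Σ_{i=1}^{m−1} t'_i·S(h_i,h_{i+1}) + t'_m·h_m, with val(t'_m h_m) > val(t_1 h_1) if t'_m ≠ 0, and val(t'_i) + max(val(h_i), val(h_{i+1})) ≥ val(t_1 h_1) for each i ∈ {1,…,m−1} with t'_i ≠ 0. -/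
open MvPowerSeries

noncomputable section

variable {K : Type*} [Field K] {n : ℕ}

theorem s17_val_ne_top (val : K → WithTop ℤ) (hval : IsCDVField val) {a : K} (ha : a ≠ 0) :
    val a ≠ ⊤ := fun h => ha ((hval.eq_top_iff a).1 h)

theorem s17_val_zero (val : K → WithTop ℤ) (hval : IsCDVField val) : val 0 = ⊤ :=
  (hval.eq_top_iff 0).2 rfl

theorem s17_ne_zero (val : K → WithTop ℤ) (hval : IsCDVField val) {a : K} {z : ℤ}
    (h : val a = (z : WithTop ℤ)) : a ≠ 0 := by
  intro h0; rw [h0, s17_val_zero val hval] at h; exact (WithTop.top_ne_coe h)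

theorem s17_val_inv (val : K → WithTop ℤ) (hval : IsCDVField val) {a : K} {z : ℤ}
    (h : val a = (z : WithTop ℤ)) : val a⁻¹ = ((-z : ℤ) : WithTop ℤ) := by
  have ha : a ≠ 0 := s17_ne_zero val hval h
  have h1 : val (a * a⁻¹) = 0 := by rw [mul_inv_cancel₀ ha]; exact hval.map_one
  rw [hval.map_mul, h] at h1
  cases hzz : val a⁻¹ with
  | top => rw [hzz] at h1; simp at h1
  | coe y =>
    rw [hzz, ← WithTop.coe_add] at h1
    have : z + y = 0 := by exact_mod_cast h1
    have hy : y = -z := by omega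
    exact_mod_cast hy

theorem s17_val_zpow (val : K → WithTop ℤ) (hval : IsCDVField val) {π : K}
    (hπ : val π = (1 : ℤ)) (z : ℤ) : val (π ^ z) = (z : WithTop ℤ) := by
  have hnat : ∀ N : ℕ, val (π ^ N) = ((N : ℤ) : WithTop ℤ) := by
    intro N
    induction N with
    | zero => simpa using hval.map_one
    | succ N ih =>
      rw [pow_succ, hval.map_mul, ih, hπ, ← WithTop.coe_add]
      push_cast; ring_nf
  cases z with
  | ofNat N => simpa using hnat N
  | negSucc N =>
    rw [zpow_negSucc, s17_val_inv val hval (hnat (N + 1))]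
    congr 1

theorem s17_valQ_coe (val : K → WithTop ℤ) {a : K} {z : ℤ} (h : val a = (z : WithTop ℤ)) :
    valQ val a = ((z : ℚ) : WithTop ℚ) := by rw [valQ, h]; rfl

theorem s17_valQ_zero (val : K → WithTop ℤ) (hval : IsCDVField val) :
    valQ val 0 = ⊤ := by rw [valQ, s17_val_zero val hval]; rfl

theorem s17_valQ_ne_top (val : K → WithTop ℤ) (hval : IsCDVField val) {a : K} (ha : a ≠ 0) :
    valQ val a ≠ ⊤ := by
  rw [valQ]
  cases hzz : val a with
  | top => exact absurd hzz (s17_val_ne_top val hval ha)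
  | coe y => exact WithTop.coe_ne_top

theorem s17_valQ_mul (val : K → WithTop ℤ) (hval : IsCDVField val) (a b : K) :
    valQ val (a * b) = valQ val a + valQ val b := by
  rw [valQ, valQ, valQ, hval.map_mul]
  cases val a with
  | top => simp
  | coe x =>
    cases val b with
    | top => simp
    | coe y => rw [← WithTop.coe_add, WithTop.map_coe, WithTop.map_coe, WithTop.map_coe,
        ← WithTop.coe_add]; push_cast; ring_nf

theorem s17_tval_zero (val : K → WithTop ℤ) (a : K) (i : Fin n →₀ ℕ) :
    tval val (0 : Fin n → ℚ) a i = valQ val a := by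
  have : wt (0 : Fin n → ℚ) i = 0 := by simp [wt]
  rw [tval, this]; simp


theorem s17_mo_cancel {mo : (Fin n →₀ ℕ) → (Fin n →₀ ℕ) → Prop} (hmo : IsMonomialOrder mo)
    {i j k : Fin n →₀ ℕ} (h : mo (i + k) (j + k)) : mo i j := by
  rcases hmo.total i j with h' | h'
  · exact h'
  · have := hmo.add_right j i k h'
    have hij : i + k = j + k := hmo.antisymm _ _ h this
    have : i = j := by
      ext x
      have := congrArg (fun f : Fin n →₀ ℕ => f x) hij
      simp [Finsupp.add_apply] at this
      omega
    rw [this]; exact hmo.refl j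

theorem s17_termlt_asymm {val : K → WithTop ℤ} {r : Fin n → ℚ}
    {mo : (Fin n →₀ ℕ) → (Fin n →₀ ℕ) → Prop} (hmo : IsMonomialOrder mo)
    {a : K} {i : Fin n →₀ ℕ} {b : K} {j : Fin n →₀ ℕ}
    (h1 : TermLt val r mo a i b j) (h2 : TermLt val r mo b j a i) : False := by
  rcases h1 with h1 | ⟨h1, hne1, hmo1⟩ <;> rcases h2 with h2 | ⟨h2, hne2, hmo2⟩
  · exact absurd h2 (not_lt_of_gt h1)
  · rw [h2] at h1; exact lt_irrefl _ h1
  · rw [h1] at h2; exact lt_irrefl _ h2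
  · exact hne1 (hmo.antisymm _ _ hmo1 hmo2)

theorem s17_lt_unique {val : K → WithTop ℤ} {r : Fin n → ℚ}
    {mo : (Fin n →₀ ℕ) → (Fin n →₀ ℕ) → Prop} (hmo : IsMonomialOrder mo)
    {f : MvPowerSeries (Fin n) K} {a : K} {i : Fin n →₀ ℕ} {a' : K} {i' : Fin n →₀ ℕ}
    (hf : IsLeadingTerm val r mo f a i) (hg : IsLeadingTerm val r mo f a' i') :
    a = a' ∧ i = i' := by
  by_cases hii : i = i'
  · refine ⟨?_, hii⟩
    rw [← hf.1, ← hg.1, hii]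
  · exfalso
    have h1 := hg.2.2 i (by rw [hf.1]; exact hf.2.1) hii
    have h2 := hf.2.2 i' (by rw [hg.1]; exact hg.2.1) (fun hc => hii hc.symm)
    rw [hf.1] at h1; rw [hg.1] at h2
    exact s17_termlt_asymm hmo h1 h2

theorem s17_leadTerm_eq {val : K → WithTop ℤ} {r : Fin n → ℚ}
    {mo : (Fin n →₀ ℕ) → (Fin n →₀ ℕ) → Prop} (hmo : IsMonomialOrder mo)
    {f : MvPowerSeries (Fin n) K} {a : K} {i : Fin n →₀ ℕ}
    (hf : IsLeadingTerm val r mo f a i) : leadTerm val r mo f = (a, i) := by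
  have hsp := Classical.epsilon_spec
    (p := fun p : K × (Fin n →₀ ℕ) => IsLeadingTerm val r mo f p.1 p.2) ⟨(a, i), hf⟩
  obtain ⟨h1, h2⟩ := s17_lt_unique hmo hsp hf
  rw [leadTerm]
  exact Prod.ext h1 h2

/-- (r = 0) cancellation lemma: if the terms `LT(t_k·h_k)` all agree
up to units of `K°` (common exponent `i₀`, common valuation `v₀`) and the sum
`Σ t_k·h_k` is zero or has leading term `< LT(t_1·h_1)`, then the sum can be
rewritten on the S-polynomials `S(h_k, h_{k+1})` and `h_m`, with the stated
valuation bounds. -/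
theorem statement17 (val : K → WithTop ℤ) (hval : IsCDVField val)
    (π : K) (hπ : val π = (1 : ℤ))
    (mo : (Fin n →₀ ℕ) → (Fin n →₀ ℕ) → Prop) (hmo : IsMonomialOrder mo)
    (m : ℕ) (h : Fin (m + 1) → MvPowerSeries (Fin n) K)
    (hh : ∀ k, IsTate val (0 : Fin n → ℚ) (h k) ∧ h k ≠ 0)
    (t : Fin (m + 1) → K × (Fin n →₀ ℕ)) (ht : ∀ k, (t k).1 ≠ 0)
    (a : Fin (m + 1) → K) (i₀ : Fin n →₀ ℕ) (v₀ : ℤ)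
    (hlt : ∀ k, IsLeadingTerm val (0 : Fin n → ℚ) mo (termMul (t k) (h k)) (a k) i₀ ∧
      val (a k) = (v₀ : WithTop ℤ))
    (w : Fin (m + 1) → ℚ) (hw : ∀ k, GaussValEq val (0 : Fin n → ℚ) (h k) (w k))
    (hsum : (∑ k, termMul (t k) (h k)) = 0 ∨
      ∃ b j, IsLeadingTerm val (0 : Fin n → ℚ) mo (∑ k, termMul (t k) (h k)) b j ∧
        TermLt val (0 : Fin n → ℚ) mo b j (a 0) i₀) :
    ∃ t' : Fin (m + 1) → K × (Fin n →₀ ℕ),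
      (∑ k, termMul (t k) (h k)) =
        (∑ k : Fin m, termMul (t' k.castSucc)
          (Spoly val π (0 : Fin n → ℚ) mo (h k.castSucc) (h k.succ)))
        + termMul (t' (Fin.last m)) (h (Fin.last m)) ∧
      ((t' (Fin.last m)).1 ≠ 0 →
        ∀ i, (((v₀ : ℚ) : WithTop ℚ)) <
          cval val (0 : Fin n → ℚ) (termMul (t' (Fin.last m)) (h (Fin.last m))) i) ∧
      (∀ k : Fin m, (t' k.castSucc).1 ≠ 0 →
        (((v₀ : ℚ) : WithTop ℚ)) ≤
          valQ val (t' k.castSucc).1 + ((max (w k.castSucc) (w k.succ) : ℚ) : WithTop ℚ)) := by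
  classical
  have hπne : π ≠ 0 := s17_ne_zero val hval hπ
  have hane : ∀ k, a k ≠ 0 := fun k => ((hlt k).1).2.1
  have hco : ∀ k, MvPowerSeries.coeff i₀ (termMul (t k) (h k)) = a k := fun k => ((hlt k).1).1
  have hcoeff_tm : ∀ (u : K × (Fin n →₀ ℕ)) (f : MvPowerSeries (Fin n) K) (j : Fin n →₀ ℕ),
      MvPowerSeries.coeff j (termMul u f)
        = if u.2 ≤ j then u.1 * MvPowerSeries.coeff (j - u.2) f else 0 := by
    intro u f j
    rw [termMul, MvPowerSeries.coeff_monomial_mul]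
  have hei : ∀ k, (t k).2 ≤ i₀ ∧ (t k).1 * MvPowerSeries.coeff (i₀ - (t k).2) (h k) = a k := by
    intro k
    have hc := hco k
    rw [hcoeff_tm] at hc
    by_cases hle : (t k).2 ≤ i₀
    · rw [if_pos hle] at hc; exact ⟨hle, hc⟩
    · rw [if_neg hle] at hc; exact absurd hc.symm (hane k)
  set b : Fin (m + 1) → K := fun k => ((t k).1)⁻¹ * a k with hbdef
  set jx : Fin (m + 1) → (Fin n →₀ ℕ) := fun k => i₀ - (t k).2 with hjxdef
  have hbne : ∀ k, b k ≠ 0 := fun k => mul_ne_zero (inv_ne_zero (ht k)) (hane k)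
  have hab : ∀ k, a k = (t k).1 * b k := by
    intro k
    show a k = (t k).1 * ((t k).1⁻¹ * a k)
    rw [← mul_assoc, mul_inv_cancel₀ (ht k), one_mul]
  have hi₀ : ∀ k, (t k).2 + jx k = i₀ := fun k => add_tsub_cancel_of_le (hei k).1
  have hjle : ∀ k, jx k ≤ i₀ := fun k => tsub_le_self
  have hts : ∀ k, i₀ - jx k = (t k).2 := by
    intro k; rw [← hi₀ k, add_tsub_cancel_right]
  have hcoeffb : ∀ k, MvPowerSeries.coeff (jx k) (h k) = b k := by
    intro k
    show MvPowerSeries.coeff (i₀ - (t k).2) (h k) = (t k).1⁻¹ * a k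
    exact (eq_inv_mul_iff_mul_eq₀ (ht k)).2 (hei k).2
  have hvalc_ne : ∀ k, valQ val (t k).1 ≠ ⊤ := fun k => s17_valQ_ne_top val hval (ht k)
  have hlb : ∀ k, IsLeadingTerm val (0 : Fin n → ℚ) mo (h k) (b k) (jx k) := by
    intro k
    refine ⟨hcoeffb k, hbne k, ?_⟩
    intro j hj hne
    have hidx : (t k).2 + j ≠ i₀ := by
      intro hc
      rw [← hi₀ k] at hc
      exact hne (add_left_cancel hc)
    have hcv : MvPowerSeries.coeff ((t k).2 + j) (termMul (t k) (h k))
        = (t k).1 * MvPowerSeries.coeff j (h k) := by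
      rw [hcoeff_tm, if_pos le_self_add, add_tsub_cancel_left]
    have h3 := ((hlt k).1).2.2 ((t k).2 + j)
      (by rw [hcv]; exact mul_ne_zero (ht k) hj) hidx
    rw [hcv] at h3
    have e1 : tval val (0 : Fin n → ℚ) (a k) i₀ = valQ val (t k).1 + valQ val (b k) := by
      rw [s17_tval_zero, hab k, s17_valQ_mul val hval]
    have e2 : tval val (0 : Fin n → ℚ) ((t k).1 * MvPowerSeries.coeff j (h k)) ((t k).2 + j)
        = valQ val (t k).1 + valQ val (MvPowerSeries.coeff j (h k)) := by
      rw [s17_tval_zero, s17_valQ_mul val hval]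
    have hmoc : mo ((t k).2 + j) i₀ → mo j (jx k) := by
      intro hmo3
      have : mo (j + (t k).2) (jx k + (t k).2) := by
        rw [add_comm j, add_comm (jx k), hi₀ k]; exact hmo3
      exact s17_mo_cancel hmo this
    rcases h3 with h3 | ⟨h3, _, hmo3⟩
    · left
      rw [s17_tval_zero, s17_tval_zero]
      rw [e1, e2] at h3
      exact (WithTop.add_lt_add_iff_left (hvalc_ne k)).1 h3
    · right
      refine ⟨?_, hne, hmoc hmo3⟩
      rw [s17_tval_zero, s17_tval_zero]
      rw [e1, e2] at h3
      exact WithTop.add_left_cancel (hvalc_ne k) h3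
  have hlead : ∀ k, leadTerm val (0 : Fin n → ℚ) mo (h k) = (b k, jx k) :=
    fun k => s17_leadTerm_eq hmo (hlb k)
  have hbex : ∀ k, ∃ z : ℤ, val (b k) = (z : WithTop ℤ) := by
    intro k
    cases hzz : val (b k) with
    | top => exact absurd hzz (s17_val_ne_top val hval (hbne k))
    | coe y => exact ⟨y, rfl⟩
  choose β hβ using hbex
  have hwβ : ∀ k, w k = (β k : ℚ) := by
    intro k
    have h1 : ((w k : ℚ) : WithTop ℚ) ≤ ((β k : ℚ) : WithTop ℚ) := by
      have h1' := (hw k).1 (jx k)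
      rwa [cval, s17_tval_zero, hcoeffb k, s17_valQ_coe val (hβ k)] at h1'
    obtain ⟨i, hi⟩ := (hw k).2
    rw [cval, s17_tval_zero] at hi
    have hine : MvPowerSeries.coeff i (h k) ≠ 0 := by
      intro h0; rw [h0, s17_valQ_zero val hval] at hi; exact WithTop.top_ne_coe hi
    have h2 : ((β k : ℚ) : WithTop ℚ) ≤ ((w k : ℚ) : WithTop ℚ) := by
      by_cases hij : i = jx k
      · rw [hij, hcoeffb k, s17_valQ_coe val (hβ k)] at hi; rw [hi]
      · have h3 := (hlb k).2.2 i hine hij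
        rcases h3 with h3 | ⟨h3, _, _⟩
        · rw [s17_tval_zero, s17_tval_zero, hi, s17_valQ_coe val (hβ k)] at h3
          exact le_of_lt h3
        · rw [s17_tval_zero, s17_tval_zero, hi, s17_valQ_coe val (hβ k)] at h3
          exact le_of_eq h3.symm
    have h4 : ((w k : ℚ) : WithTop ℚ) = ((β k : ℚ) : WithTop ℚ) := le_antisymm h1 h2
    exact_mod_cast h4
  have hSp : ∀ k : Fin m, Spoly val π (0 : Fin n → ℚ) mo (h k.castSucc) (h k.succ)
      = termMul (b k.succ * π ^ (-(min (β k.castSucc) (β k.succ))),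
            jx k.succ - jx k.castSucc) (h k.castSucc)
        - termMul (b k.castSucc * π ^ (-(min (β k.castSucc) (β k.succ))),
            jx k.castSucc - jx k.succ) (h k.succ) := by
    intro k
    simp only [Spoly, hlead k.castSucc, hlead k.succ, hβ, WithTop.untopD_coe]
  set a' : ℕ → K := fun N => if hN : N < m + 1 then a ⟨N, hN⟩ else 0 with ha'def
  set s : ℕ → K := fun N => ∑ j ∈ Finset.range N, a' j with hsdef
  have hs0 : s 0 = 0 := by rw [hsdef]; simp
  have hssucc : ∀ N, s (N + 1) = s N + a' N := by
    intro N; rw [hsdef]; exact Finset.sum_range_succ a' N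
  have ha'k : ∀ k : Fin (m + 1), a' (k : ℕ) = a k := by
    intro k
    show (if hN : (k : ℕ) < m + 1 then a ⟨(k : ℕ), hN⟩ else 0) = a k
    rw [dif_pos k.isLt]
  set t' : Fin (m + 1) → K × (Fin n →₀ ℕ) := fun k =>
    if hk : (k : ℕ) < m then
      (s ((k : ℕ) + 1) * π ^ (min (β (⟨(k : ℕ), hk⟩ : Fin m).castSucc) (β (⟨(k : ℕ), hk⟩ : Fin m).succ))
          * (b (⟨(k : ℕ), hk⟩ : Fin m).castSucc)⁻¹ * (b (⟨(k : ℕ), hk⟩ : Fin m).succ)⁻¹,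
        i₀ - (jx (⟨(k : ℕ), hk⟩ : Fin m).castSucc ⊔ jx (⟨(k : ℕ), hk⟩ : Fin m).succ))
    else (s (m + 1) * (b (Fin.last m))⁻¹, i₀ - jx (Fin.last m)) with ht'def
  have ht'c : ∀ k : Fin m, t' k.castSucc
      = (s ((k : ℕ) + 1) * π ^ (min (β k.castSucc) (β k.succ))
          * (b k.castSucc)⁻¹ * (b k.succ)⁻¹,
        i₀ - (jx k.castSucc ⊔ jx k.succ)) := by
    intro k
    show dite _ _ _ = _
    rw [dif_pos (show ((k.castSucc : ℕ)) < m from k.isLt)]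
    rfl
  have ht'l : t' (Fin.last m) = (s (m + 1) * (b (Fin.last m))⁻¹, i₀ - jx (Fin.last m)) := by
    show dite _ _ _ = _
    rw [dif_neg (by simp)]
  refine ⟨t', ?_, ?_, ?_⟩
  · -- the sum identity
    have hexp : ∀ (j1 j2 : Fin n →₀ ℕ), j1 ≤ i₀ → j2 ≤ i₀ →
        (i₀ - (j1 ⊔ j2)) + (j2 - j1) = i₀ - j1 := by
      intro j1 j2 h1 h2
      ext x
      have hx1 : j1 x ≤ i₀ x := h1 x
      have hx2 : j2 x ≤ i₀ x := h2 x
      simp only [Finsupp.add_apply, Finsupp.tsub_apply, Finsupp.sup_apply]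
      omega
    have hπzne : ∀ z : ℤ, π ^ z ≠ 0 := fun z => zpow_ne_zero z hπne
    have hcoef : ∀ (x y σ : K) (z : ℤ), x ≠ 0 → y ≠ 0 →
        (σ * π ^ z * x⁻¹ * y⁻¹) * (y * π ^ (-z)) = σ * x⁻¹ := by
      intro x y σ z hx hy
      rw [zpow_neg]
      field_simp [hπzne z]
    have hPQ : ∀ k : Fin m, termMul (t' k.castSucc)
        (Spoly val π (0 : Fin n → ℚ) mo (h k.castSucc) (h k.succ))
        = (MvPowerSeries.monomial (t k.castSucc).2)
            (s ((k : ℕ) + 1) * (b k.castSucc)⁻¹) * h k.castSucc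
          - (MvPowerSeries.monomial (t k.succ).2)
            (s ((k : ℕ) + 1) * (b k.succ)⁻¹) * h k.succ := by
      intro k
      rw [hSp k, ht'c k, termMul, termMul, termMul, mul_sub, ← mul_assoc, ← mul_assoc,
        MvPowerSeries.monomial_mul_monomial, MvPowerSeries.monomial_mul_monomial]
      have hexp1 : (i₀ - (jx k.castSucc ⊔ jx k.succ)) + (jx k.succ - jx k.castSucc)
          = (t k.castSucc).2 := by
        rw [hexp _ _ (hjle k.castSucc) (hjle k.succ), hts]
      have hexp2 : (i₀ - (jx k.castSucc ⊔ jx k.succ)) + (jx k.castSucc - jx k.succ)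
          = (t k.succ).2 := by
        rw [sup_comm, hexp _ _ (hjle k.succ) (hjle k.castSucc), hts]
      rw [hexp1, hexp2,
        hcoef (b k.castSucc) (b k.succ) _ _ (hbne k.castSucc) (hbne k.succ)]
      have hc2 : (s ((k : ℕ) + 1) * π ^ (min (β k.castSucc) (β k.succ))
            * (b k.castSucc)⁻¹ * (b k.succ)⁻¹) * (b k.castSucc * π ^ (-(min (β k.castSucc) (β k.succ))))
          = s ((k : ℕ) + 1) * (b k.succ)⁻¹ := by
        have := hcoef (b k.succ) (b k.castSucc) (s ((k : ℕ) + 1))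
          (min (β k.castSucc) (β k.succ)) (hbne k.succ) (hbne k.castSucc)
        rw [← this]; ring
      rw [hc2]
    set P : Fin (m + 1) → MvPowerSeries (Fin n) K :=
      fun k => (MvPowerSeries.monomial (t k).2) (s ((k : ℕ) + 1) * (b k)⁻¹) * h k with hPdef
    set Q : Fin (m + 1) → MvPowerSeries (Fin n) K :=
      fun k => (MvPowerSeries.monomial (t k).2) (s (k : ℕ) * (b k)⁻¹) * h k with hQdef
    have hFk : ∀ k, termMul (t k) (h k) = P k - Q k := by
      intro k
      have hcc : s ((k : ℕ) + 1) * (b k)⁻¹ = s (k : ℕ) * (b k)⁻¹ + (t k).1 := by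
        rw [hssucc, ha'k k, add_mul, hab k, mul_assoc, mul_inv_cancel₀ (hbne k), mul_one]
      show termMul (t k) (h k)
        = (MvPowerSeries.monomial (t k).2) (s ((k : ℕ) + 1) * (b k)⁻¹) * h k
          - (MvPowerSeries.monomial (t k).2) (s (k : ℕ) * (b k)⁻¹) * h k
      rw [hcc, map_add, add_mul, termMul]
      ring
    have hR : (∑ k : Fin m, termMul (t' k.castSucc)
          (Spoly val π (0 : Fin n → ℚ) mo (h k.castSucc) (h k.succ)))
        = (∑ k : Fin m, P k.castSucc) - (∑ k : Fin m, Q k.succ) := by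
      rw [← Finset.sum_sub_distrib]
      refine Finset.sum_congr rfl fun k _ => ?_
      rw [hPQ k]
      rfl
    have hlastP : termMul (t' (Fin.last m)) (h (Fin.last m)) = P (Fin.last m) := by
      show termMul (t' (Fin.last m)) (h (Fin.last m))
        = (MvPowerSeries.monomial (t (Fin.last m)).2)
            (s (((Fin.last m) : ℕ) + 1) * (b (Fin.last m))⁻¹) * h (Fin.last m)
      rw [ht'l, termMul, hts (Fin.last m)]
      rfl
    have hQ0 : Q 0 = 0 := by
      show (MvPowerSeries.monomial (t 0).2) (s ((0 : Fin (m + 1)) : ℕ) * (b 0)⁻¹) * h 0 = 0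
      rw [show (((0 : Fin (m + 1)) : ℕ)) = 0 from rfl, hs0, zero_mul, map_zero, zero_mul]
    rw [hR, hlastP, Finset.sum_congr rfl fun k _ => hFk k, Finset.sum_sub_distrib,
      Fin.sum_univ_castSucc (f := P), Fin.sum_univ_succ (f := Q), hQ0]
    abel
  · -- strict bound for the last quotient
    intro h0 i
    rw [ht'l] at h0
    have hsne : s (m + 1) ≠ 0 := left_ne_zero_of_mul h0
    have hcs : MvPowerSeries.coeff i₀ (∑ k, termMul (t k) (h k)) = s (m + 1) := by
      rw [map_sum]
      have hsm : s (m + 1) = ∑ k : Fin (m + 1), a k := by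
        show ∑ j ∈ Finset.range (m + 1), a' j = _
        rw [← Fin.sum_univ_eq_sum_range a' (m + 1)]
        exact Finset.sum_congr rfl fun k _ => ha'k k
      rw [hsm]
      exact Finset.sum_congr rfl fun k _ => hco k
    have hv : ((v₀ : ℚ) : WithTop ℚ) < valQ val (s (m + 1)) := by
      have hva0 : tval val (0 : Fin n → ℚ) (a 0) i₀ = ((v₀ : ℚ) : WithTop ℚ) := by
        rw [s17_tval_zero]; exact s17_valQ_coe val (hlt 0).2
      rw [← s17_tval_zero val (s (m + 1)) i₀]
      rcases hsum with hz | ⟨bb, jj, hlts, hlt0⟩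
      · rw [hz] at hcs; simp at hcs; exact absurd hcs.symm hsne
      · by_cases hij : jj = i₀
        · subst hij
          have hbbs : bb = s (m + 1) := by rw [← hlts.1, hcs]
          rcases hlt0 with hl | ⟨_, hne, _⟩
          · rw [hva0, hbbs] at hl; exact hl
          · exact absurd rfl hne
        · have h3 := hlts.2.2 i₀ (by rw [hcs]; exact hsne) (fun hc => hij hc.symm)
          rw [hcs] at h3
          rcases h3 with h3 | ⟨h3, _, hmo3⟩ <;> rcases hlt0 with h4 | ⟨h4, hne4, hmo4⟩
          · rw [hva0] at h4
            exact lt_trans h4 h3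
          · rw [hva0] at h4
            rw [h4] at h3
            exact h3
          · rw [hva0] at h4
            rw [← h3] at h4
            exact h4
          · exact absurd (hmo.antisymm _ _ hmo4 hmo3) hne4
    obtain ⟨z, hz⟩ : ∃ z : ℤ, val (s (m + 1)) = (z : WithTop ℤ) := by
      cases hzz : val (s (m + 1)) with
      | top => exact absurd hzz (s17_val_ne_top val hval hsne)
      | coe y => exact ⟨y, rfl⟩
    rw [cval, s17_tval_zero, hcoeff_tm]
    by_cases hle : (t' (Fin.last m)).2 ≤ i
    · rw [if_pos hle]
      set x := MvPowerSeries.coeff (i - (t' (Fin.last m)).2) (h (Fin.last m)) with hxdef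
      by_cases hx : x = 0
      · rw [hx, mul_zero, s17_valQ_zero val hval]
        exact WithTop.coe_lt_top _
      · have hc1 : (t' (Fin.last m)).1 = s (m + 1) * (b (Fin.last m))⁻¹ := by rw [ht'l]
        rw [hc1, s17_valQ_mul val hval, s17_valQ_mul val hval]
        have hbinv : valQ val ((b (Fin.last m))⁻¹)
            = ((-(β (Fin.last m)) : ℚ) : WithTop ℚ) := by
          rw [s17_valQ_coe val (s17_val_inv val hval (hβ (Fin.last m)))]
          push_cast
          rfl
        have hxge : ((β (Fin.last m) : ℚ) : WithTop ℚ) ≤ valQ val x := by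
          have hh1 := (hw (Fin.last m)).1 (i - (t' (Fin.last m)).2)
          rw [cval, s17_tval_zero, ← hxdef] at hh1
          rw [hwβ (Fin.last m)] at hh1
          exact hh1
        rw [s17_valQ_coe val hz, hbinv, ← WithTop.coe_add]
        have hvz : (v₀ : ℚ) < (z : ℚ) := by
          rw [s17_valQ_coe val hz] at hv
          exact_mod_cast hv
        calc ((v₀ : ℚ) : WithTop ℚ)
            < (((z : ℚ) + -(β (Fin.last m) : ℚ) : ℚ) : WithTop ℚ)
              + ((β (Fin.last m) : ℚ) : WithTop ℚ) := by
              rw [← WithTop.coe_add, WithTop.coe_lt_coe]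
              linarith
          _ ≤ (((z : ℚ) + -(β (Fin.last m) : ℚ) : ℚ) : WithTop ℚ) + valQ val x :=
              add_le_add_right hxge _
    · rw [if_neg hle, s17_valQ_zero val hval]
      exact WithTop.coe_lt_top _
  · -- bound for the S-polynomial quotients
    intro k h0
    have hc1 : (t' k.castSucc).1 = s ((k : ℕ) + 1) * π ^ (min (β k.castSucc) (β k.succ))
        * (b k.castSucc)⁻¹ * (b k.succ)⁻¹ := by rw [ht'c k]
    rw [hc1] at h0
    have hsne : s ((k : ℕ) + 1) ≠ 0 :=
      left_ne_zero_of_mul (left_ne_zero_of_mul (left_ne_zero_of_mul h0))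
    have hsv : ∀ N : ℕ, (v₀ : WithTop ℤ) ≤ val (s N) := by
      intro N
      induction N with
      | zero => rw [hs0, s17_val_zero val hval]; exact le_top
      | succ N ih =>
        rw [hssucc]
        refine le_trans (le_min ih ?_) (hval.min_le_val_add _ _)
        by_cases hN : N < m + 1
        · have : a' N = a ⟨N, hN⟩ := by
            show (if hN' : N < m + 1 then a ⟨N, hN'⟩ else 0) = a ⟨N, hN⟩
            rw [dif_pos hN]
          rw [this, (hlt ⟨N, hN⟩).2]
        · have : a' N = 0 := by
            show (if hN' : N < m + 1 then a ⟨N, hN'⟩ else 0) = 0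
            rw [dif_neg hN]
          rw [this, s17_val_zero val hval]
          exact le_top
    obtain ⟨z, hz⟩ : ∃ z : ℤ, val (s ((k : ℕ) + 1)) = (z : WithTop ℤ) := by
      cases hzz : val (s ((k : ℕ) + 1)) with
      | top => exact absurd hzz (s17_val_ne_top val hval hsne)
      | coe y => exact ⟨y, rfl⟩
    have hzv : v₀ ≤ z := by
      have := hsv ((k : ℕ) + 1)
      rw [hz] at this
      exact_mod_cast this
    have hvc : val ((t' k.castSucc).1)
        = ((z + min (β k.castSucc) (β k.succ) + -(β k.castSucc) + -(β k.succ) : ℤ) : WithTop ℤ) := by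
      rw [hc1, hval.map_mul, hval.map_mul, hval.map_mul, hz,
        s17_val_zpow val hval hπ, s17_val_inv val hval (hβ k.castSucc),
        s17_val_inv val hval (hβ k.succ)]
      push_cast
      ring_nf
    rw [s17_valQ_coe val hvc, hwβ k.castSucc, hwβ k.succ,
      ← WithTop.coe_add, WithTop.coe_le_coe]
    have hmm : min ((β k.castSucc : ℚ)) ((β k.succ : ℚ)) + max ((β k.castSucc : ℚ)) ((β k.succ : ℚ))
        = (β k.castSucc : ℚ) + (β k.succ : ℚ) := min_add_max _ _
    have hzq : (v₀ : ℚ) ≤ (z : ℚ) := by exact_mod_cast hzv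
    push_cast
    linarith
end
end
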